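/- arXiv:1505.01122 — 3 statements merged into one kernel-verified Lean document; each statement's English description precedes it below -/
import Mathlib

section
/- Let n ≥ 1 be an integer, p > 1, ρ > 0 and x₀ ∈ ℝⁿ. Let f be twice continuously differentiable on an open neighborhood of the closed ball of radius ρ centered at x₀, with |∇f(x)| > 0 for every x in that closed ball. Then for every continuously differentiable function ξ : ℝⁿ → ℝ with compact support contained in B_ρ(x₀): ∫_{B_ρ(x₀)} |∇f|^{p+2} ξ² dx ≤ 2(√n + p)² (osc_{B_ρ(x₀)} f)² ∫_{B_ρ(x₀)} [ |∇f|^{p−2} |∇²f|² ξ² + |∇f|^p |∇ξ|² ] dx, where osc_{B_ρ(x₀)} f = sup_{x ∈ B_ρ(x₀)} |f(x) − f(x₀)|. -/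
open MeasureTheory Metric Real
open scoped InnerProductSpace Topology

noncomputable section

/-- `ℝⁿ` with the Euclidean norm. -/
abbrev Esp (n : ℕ) := EuclideanSpace ℝ (Fin n)

/-- The `k`-th standard basis vector of `ℝⁿ`. -/
def eb (n : ℕ) (k : Fin n) : Esp n := EuclideanSpace.single k (1 : ℝ)

/-- Frobenius norm `|∇²u|` of the Hessian of `u`. -/
def hessNorm (n : ℕ) (u : Esp n → ℝ) (x : Esp n) : ℝ :=
  Real.sqrt (∑ i : Fin n, ∑ j : Fin n,
    (fderiv ℝ (fun y => fderiv ℝ u y (eb n j)) x (eb n i)) ^ 2)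

lemma inner_eb_right (n : ℕ) (a : Esp n) (j : Fin n) : ⟪a, eb n j⟫_ℝ = a j := by
  simp [eb, EuclideanSpace.inner_single_right]

lemma euclid_norm_sq (n : ℕ) (a : Esp n) : ‖a‖ ^ 2 = ∑ i, (a i) ^ 2 := by
  rw [EuclideanSpace.norm_eq, Real.sq_sqrt (by positivity)]
  simp [sq_abs]

lemma inner_sum_repr (n : ℕ) (u v : Esp n) : ⟪u, v⟫_ℝ = ∑ i, u i * v i := by
  simp [PiLp.inner_apply, RCLike.inner_apply, conj_trivial, mul_comm]

lemma rpow_sq_eq {x : ℝ} (hx : 0 ≤ x) (a : ℝ) : (x ^ a) ^ (2:ℕ) = x ^ (a * 2) := by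
  rw [← Real.rpow_natCast (x ^ a) 2, ← Real.rpow_mul hx]
  norm_num

lemma glue_contDiff {E F : Type*} [NormedAddCommGroup E] [NormedSpace ℝ E]
    [NormedAddCommGroup F] [NormedSpace ℝ F] {f : E → F} {O C : Set E}
    (hO : IsOpen O) (hC : IsClosed C) (hCO : C ⊆ O)
    (hf : ContDiffOn ℝ 1 f O) (h0 : ∀ x ∉ C, f x = 0) : ContDiff ℝ 1 f := by
  rw [contDiff_iff_contDiffAt]
  intro x
  by_cases hx : x ∈ O
  · exact hf.contDiffAt (hO.mem_nhds hx)
  · have hxC : x ∈ Cᶜ := fun h => hx (hCO h)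
    have : f =ᶠ[𝓝 x] fun _ => 0 := by
      filter_upwards [hC.isOpen_compl.mem_nhds hxC] with y hy using h0 y hy
    exact (contDiffAt_const (c := (0:F))).congr_of_eventuallyEq this

lemma glue_continuous {E F : Type*} [TopologicalSpace E] [NormedAddCommGroup F]
    {f : E → F} {O C : Set E}
    (hO : IsOpen O) (hC : IsClosed C) (hCO : C ⊆ O)
    (hf : ContinuousOn f O) (h0 : ∀ x ∉ C, f x = 0) : Continuous f := by
  rw [continuous_iff_continuousAt]
  intro x
  by_cases hx : x ∈ O
  · exact hf.continuousAt (hO.mem_nhds hx)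
  · have hxC : x ∈ Cᶜ := fun h => hx (hCO h)
    have : f =ᶠ[𝓝 x] fun _ => 0 := by
      filter_upwards [hC.isOpen_compl.mem_nhds hxC] with y hy using h0 y hy
    exact ContinuousAt.congr (continuousAt_const (y := (0:F))) this.symm

lemma fderiv_zero_of_nmem_closed {E F : Type*} [NormedAddCommGroup E] [NormedSpace ℝ E]
    [NormedAddCommGroup F] [NormedSpace ℝ F] {f : E → F} {C : Set E}
    (hC : IsClosed C) (h0 : ∀ x ∉ C, f x = 0) {x : E} (hx : x ∉ C) :
    fderiv ℝ f x = 0 := by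
  have : f =ᶠ[𝓝 x] fun _ => 0 := by
    filter_upwards [hC.isOpen_compl.mem_nhds hx] with y hy using h0 y hy
  rw [this.fderiv_eq, fderiv_const_apply]

lemma integral_fderiv_apply_eq_zero {n : ℕ} {G : Esp n → ℝ}
    (hG : ContDiff ℝ 1 G) (hcs : HasCompactSupport G) (v : Esp n) :
    ∫ x, fderiv ℝ G x v = 0 := by
  have hcont : Continuous fun x => fderiv ℝ G x v :=
    (hG.continuous_fderiv one_ne_zero).clm_apply continuous_const
  have hcs' : HasCompactSupport fun x => fderiv ℝ G x v :=
    (hcs.fderiv ℝ).comp_left (g := fun L : Esp n →L[ℝ] ℝ => L v) rfl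
  have h1 : Integrable (fun x => fderiv ℝ G x v * 1) volume := by
    simpa using hcont.integrable_of_hasCompactSupport hcs'
  have h2 : Integrable (fun x => G x * fderiv ℝ (fun _ => (1:ℝ)) x v) volume := by
    simp [fderiv_const]
  have h3 : Integrable (fun x => G x * 1) volume := by
    simpa using (hG.continuous).integrable_of_hasCompactSupport hcs
  have := integral_mul_fderiv_eq_neg_fderiv_mul_of_integrable h1 h2 h3
    (fun x _ => hG.differentiable one_ne_zero x) (fun x _ => differentiable_const (1:ℝ) x) (v := v)
  simp only [fderiv_const, Pi.zero_apply, ContinuousLinearMap.zero_apply, mul_zero,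
    mul_one, integral_zero] at this
  simpa using neg_eq_zero.mp (by simpa using this.symm.symm)

lemma cs_integral {n : ℕ} (s : Set (Esp n)) (hs : MeasurableSet s) (hfin : volume s ≠ ⊤)
    (u w : Esp n → ℝ)
    (hu : AEStronglyMeasurable u (volume.restrict s))
    (hw : AEStronglyMeasurable w (volume.restrict s))
    (Cu Cw : ℝ) (hCu : ∀ x ∈ s, |u x| ≤ Cu) (hCw : ∀ x ∈ s, |w x| ≤ Cw)
    (hu0 : ∀ x ∈ s, 0 ≤ u x) (hw0 : ∀ x ∈ s, 0 ≤ w x) :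
    ∫ x in s, u x * w x ≤ Real.sqrt (∫ x in s, u x ^ 2) * Real.sqrt (∫ x in s, w x ^ 2) := by
  haveI : IsFiniteMeasure (volume.restrict s) :=
    ⟨by rw [Measure.restrict_apply_univ]; exact lt_of_le_of_ne le_top hfin⟩
  have hpq : Real.HolderConjugate 2 2 := by constructor <;> norm_num
  have hmu : MemLp u (ENNReal.ofReal 2) (volume.restrict s) := by
    refine MemLp.of_bound hu Cu ?_
    filter_upwards [self_mem_ae_restrict hs] with x hx
    simpa [Real.norm_eq_abs] using hCu x hx
  have hmw : MemLp w (ENNReal.ofReal 2) (volume.restrict s) := by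
    refine MemLp.of_bound hw Cw ?_
    filter_upwards [self_mem_ae_restrict hs] with x hx
    simpa [Real.norm_eq_abs] using hCw x hx
  have h0u : 0 ≤ᵐ[volume.restrict s] u := by
    filter_upwards [self_mem_ae_restrict hs] with x hx using hu0 x hx
  have h0w : 0 ≤ᵐ[volume.restrict s] w := by
    filter_upwards [self_mem_ae_restrict hs] with x hx using hw0 x hx
  have H := MeasureTheory.integral_mul_le_Lp_mul_Lq_of_nonneg hpq h0u h0w hmu hmw
  have e1 : ∀ v : Esp n → ℝ, (∫ x in s, v x ^ (2:ℝ)) = ∫ x in s, v x ^ 2 := by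
    intro v; apply integral_congr_ae; filter_upwards with x; rw [Real.rpow_two]
  rw [e1, e1] at H
  have e2 : ∀ a : ℝ, a ^ (1/2 : ℝ) = Real.sqrt a := fun a => by
    rw [Real.sqrt_eq_rpow]
  rw [e2, e2] at H
  exact H

set_option maxHeartbeats 2000000 in
/-- **Lemma 3.1** (interpolation-type inequality). If `f` is `C²` near `closedBall x₀ ρ`
with `|∇f| > 0` there, then for every `C¹` cut-off `ξ` compactly supported in `B_ρ(x₀)`:
`∫ |∇f|^{p+2} ξ² ≤ 2(√n + p)² (osc f)² ∫ [|∇f|^{p-2} |∇²f|² ξ² + |∇f|^p |∇ξ|²]`. -/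
theorem statement7 (n : ℕ) (hn : 1 ≤ n) (p ρ : ℝ) (hp : 1 < p) (hρ : 0 < ρ)
    (x₀ : Esp n) (f : Esp n → ℝ) (U : Set (Esp n)) (hU : IsOpen U)
    (hsub : closedBall x₀ ρ ⊆ U) (hf : ContDiffOn ℝ 2 f U)
    (hgrad : ∀ x ∈ closedBall x₀ ρ, gradient f x ≠ 0)
    (ξ : Esp n → ℝ) (hξ : ContDiff ℝ 1 ξ) (hcs : HasCompactSupport ξ)
    (hsupp : tsupport ξ ⊆ ball x₀ ρ) :
    (∫ x in ball x₀ ρ, ‖gradient f x‖ ^ (p + 2) * ξ x ^ 2)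
      ≤ 2 * (Real.sqrt n + p) ^ 2 * (⨆ x ∈ ball x₀ ρ, |f x - f x₀|) ^ 2 *
        ∫ x in ball x₀ ρ,
          (‖gradient f x‖ ^ (p - 2) * hessNorm n f x ^ 2 * ξ x ^ 2 +
            ‖gradient f x‖ ^ p * ‖gradient ξ x‖ ^ 2) := by
  -- Abbreviations
  have hball : ball x₀ ρ ⊆ U := fun x hx => hsub (ball_subset_closedBall hx)
  set K : Set (Esp n) := tsupport ξ with hKdef
  have hKc : IsCompact K := hcs
  have hKcl : IsClosed K := isClosed_tsupport ξ
  have hKball : K ⊆ ball x₀ ρ := hsupp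
  -- the "good" open set
  have hfd : ContDiffOn ℝ 1 (fderiv ℝ f) U := hf.fderiv_of_isOpen hU (by norm_num)
  have hgradeq : gradient f = fun y => (InnerProductSpace.toDual ℝ (Esp n)).symm (fderiv ℝ f y) :=
    rfl
  have hgradcont : ContinuousOn (gradient f) U := by
    rw [hgradeq]
    exact (InnerProductSpace.toDual ℝ (Esp n)).symm.continuous.comp_continuousOn hfd.continuousOn
  set U' : Set (Esp n) := U ∩ gradient f ⁻¹' ({0}ᶜ) with hU'def
  have hU'open : IsOpen U' := hgradcont.isOpen_inter_preimage hU isOpen_compl_singleton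
  have hcbU' : closedBall x₀ ρ ⊆ U' := fun x hx => ⟨hsub hx, hgrad x hx⟩
  have hKU' : K ⊆ U' := fun x hx => hcbU' (ball_subset_closedBall (hKball hx))
  have hU'U : U' ⊆ U := Set.inter_subset_left
  have hU'g : ∀ x ∈ U', gradient f x ≠ 0 := fun x hx => hx.2
  -- gradient regularity
  have hgC1 : ContDiffOn ℝ 1 (gradient f) U := by
    rw [hgradeq]
    exact ((InnerProductSpace.toDual ℝ (Esp n)).symm.contDiff).comp_contDiffOn hfd
  -- coordinate functions of the gradient
  have hFj : ∀ j : Fin n, (fun y => fderiv ℝ f y (eb n j))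
      = fun y => ⟪gradient f y, eb n j⟫_ℝ := by
    intro j; funext y
    rw [show gradient f y = (InnerProductSpace.toDual ℝ (Esp n)).symm (fderiv ℝ f y) from rfl,
      InnerProductSpace.toDual_symm_apply]
  -- the vector field components
  set V : Fin n → Esp n → ℝ :=
    fun i x => ξ x * ξ x * ‖gradient f x‖ ^ p * fderiv ℝ f x (eb n i) with hVdef
  have hV0 : ∀ i, ∀ x ∉ K, V i x = 0 := by
    intro i x hx
    have : ξ x = 0 := image_eq_zero_of_notMem_tsupport hx
    simp [hVdef, this]
  have hre : ∀ y : Esp n, ‖gradient f y‖ ^ p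
      = (⟪gradient f y, gradient f y⟫_ℝ) ^ (p/2 : ℝ) := by
    intro y
    rw [real_inner_self_eq_norm_sq, ← Real.rpow_natCast ‖gradient f y‖ 2,
      ← Real.rpow_mul (norm_nonneg _)]
    congr 1
    push_cast
    ring
  have hQC1 : ContDiffOn ℝ 1 (fun y => ⟪gradient f y, gradient f y⟫_ℝ) U :=
    hgC1.inner ℝ hgC1
  have hNpC1 : ContDiffOn ℝ 1 (fun y => ‖gradient f y‖ ^ p) U' := by
    intro x hx
    apply ContDiffAt.contDiffWithinAt
    have hQ0 : ⟪gradient f x, gradient f x⟫_ℝ ≠ 0 := by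
      rw [real_inner_self_eq_norm_sq]
      have : gradient f x ≠ 0 := hx.2
      exact pow_ne_zero 2 (norm_ne_zero_iff.mpr this)
    have := (Real.contDiffAt_rpow_const_of_ne (p := p/2) hQ0 (n := 1)).comp x
      (hQC1.contDiffAt (hU.mem_nhds hx.1))
    exact this.congr_of_eventuallyEq (by filter_upwards with y using (hre y))
  have hFiC1 : ∀ i : Fin n, ContDiffOn ℝ 1 (fun y => fderiv ℝ f y (eb n i)) U :=
    fun i => hfd.clm_apply contDiffOn_const
  have hVC1 : ∀ i, ContDiff ℝ 1 (V i) := by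
    intro i
    apply glue_contDiff hU'open hKcl hKU' ?_ (hV0 i)
    exact (((hξ.mul hξ).contDiffOn.mono (Set.subset_univ _)).mul hNpC1).mul
      ((hFiC1 i).mono hU'U)
  have hVcs : ∀ i, HasCompactSupport (V i) := by
    intro i
    apply HasCompactSupport.of_support_subset_isCompact hKc
    intro x hx
    by_contra hxK
    exact hx (hV0 i x hxK)
  -- the functions G i = (f - f x₀) * V i
  set G : Fin n → Esp n → ℝ := fun i x => (f x - f x₀) * V i x with hGdef
  have hG0 : ∀ i, ∀ x ∉ K, G i x = 0 := fun i x hx => by simp [hGdef, hV0 i x hx]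
  have hGC1 : ∀ i, ContDiff ℝ 1 (G i) := by
    intro i
    apply glue_contDiff hU'open hKcl hKU' ?_ (hG0 i)
    exact (((hf.of_le one_le_two).mono hU'U).sub contDiffOn_const).mul (hVC1 i).contDiffOn
  have hGcs : ∀ i, HasCompactSupport (G i) := by
    intro i
    apply HasCompactSupport.of_support_subset_isCompact hKc
    intro x hx
    by_contra hxK
    exact hx (hG0 i x hxK)
  -- divergence-type functions
  set P : Esp n → ℝ := fun x => ∑ i : Fin n, fderiv ℝ f x (eb n i) * V i x with hPdef
  set D : Esp n → ℝ := fun x => ∑ i : Fin n, fderiv ℝ (V i) x (eb n i) with hDdef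
  have hD0 : ∀ x ∉ K, D x = 0 := by
    intro x hx
    have : ∀ i : Fin n, fderiv ℝ (V i) x = 0 :=
      fun i => fderiv_zero_of_nmem_closed hKcl (hV0 i) hx
    simp [hDdef, this]
  -- pointwise product rule
  have hPt : ∀ x, (∑ i : Fin n, fderiv ℝ (G i) x (eb n i)) = P x + (f x - f x₀) * D x := by
    intro x
    by_cases hx : x ∈ U'
    · have hfdx : DifferentiableAt ℝ f x :=
        (hf.contDiffAt (hU.mem_nhds (hU'U hx))).differentiableAt two_ne_zero
      have hstep : ∀ i : Fin n, fderiv ℝ (G i) x (eb n i)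
          = fderiv ℝ f x (eb n i) * V i x + (f x - f x₀) * fderiv ℝ (V i) x (eb n i) := by
        intro i
        have hgi : fderiv ℝ (G i) x = (f x - f x₀) • fderiv ℝ (V i) x
            + V i x • fderiv ℝ (fun y => f y - f x₀) x :=
          fderiv_mul (hfdx.sub_const _) ((hVC1 i).differentiable one_ne_zero x)
        rw [hgi]
        simp only [ContinuousLinearMap.add_apply, ContinuousLinearMap.smul_apply,
          smul_eq_mul, fderiv_sub_const]
        ring
      rw [Finset.sum_congr rfl (fun i _ => hstep i), Finset.sum_add_distrib, ← Finset.mul_sum]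
    · have hxK : x ∉ K := fun h => hx (hKU' h)
      have h1 : ∀ i : Fin n, fderiv ℝ (G i) x = 0 :=
        fun i => fderiv_zero_of_nmem_closed hKcl (hG0 i) hxK
      have h2 : ∀ i : Fin n, V i x = 0 := fun i => hV0 i x hxK
      simp [hPdef, h1, h2, hD0 x hxK]
  -- integrability
  have hPcont : Continuous P := by
    apply glue_continuous hU'open hKcl hKU'
    · exact continuousOn_finset_sum _ fun i _ =>
        ((hfd.continuousOn.mono hU'U).clm_apply continuousOn_const).mul
          (hVC1 i).continuous.continuousOn
    · intro x hx; simp [hPdef, hV0 _ x hx]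
  have hPcs : HasCompactSupport P := by
    apply HasCompactSupport.of_support_subset_isCompact hKc
    intro x hx
    by_contra hxK
    exact hx (by simp [hPdef, hV0 _ x hxK])
  have hPint : Integrable P volume := hPcont.integrable_of_hasCompactSupport hPcs
  have hDcont : Continuous D :=
    continuous_finset_sum _ fun i _ =>
      ((hVC1 i).continuous_fderiv one_ne_zero).clm_apply continuous_const
  have hhDcont : Continuous (fun x => (f x - f x₀) * D x) := by
    apply glue_continuous hU'open hKcl hKU'
    · exact (((hf.continuousOn.mono hU'U)).sub continuousOn_const).mul
        hDcont.continuousOn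
    · intro x hx; simp [hD0 x hx]
  have hhDcs : HasCompactSupport (fun x => (f x - f x₀) * D x) := by
    apply HasCompactSupport.of_support_subset_isCompact hKc
    intro x hx
    by_contra hxK
    exact hx (by simp [hD0 x hxK])
  have hhDint : Integrable (fun x => (f x - f x₀) * D x) volume :=
    hhDcont.integrable_of_hasCompactSupport hhDcs
  -- integration by parts
  have hIBP : ∫ x, P x = - ∫ x, (f x - f x₀) * D x := by
    have h0 : ∀ i : Fin n, ∫ x, fderiv ℝ (G i) x (eb n i) = 0 :=
      fun i => integral_fderiv_apply_eq_zero (hGC1 i) (hGcs i) _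
    have hint_i : ∀ i : Fin n, Integrable (fun x => fderiv ℝ (G i) x (eb n i)) volume := by
      intro i
      apply Continuous.integrable_of_hasCompactSupport
      · exact ((hGC1 i).continuous_fderiv one_ne_zero).clm_apply continuous_const
      · exact ((hGcs i).fderiv ℝ).comp_left (g := fun L : Esp n →L[ℝ] ℝ => L (eb n i)) rfl
    have hsum : ∫ x, ∑ i : Fin n, fderiv ℝ (G i) x (eb n i) = 0 := by
      rw [integral_finset_sum _ (fun i _ => hint_i i)]
      simp [h0]
    rw [integral_congr_ae (Filter.Eventually.of_forall hPt)] at hsum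
    rw [integral_add hPint hhDint] at hsum
    linarith
  -- LHS equals ∫ P
  have hsumsq : ∀ x ∈ U, ∑ i : Fin n, (fderiv ℝ f x (eb n i)) ^ 2 = ‖gradient f x‖ ^ 2 := by
    intro x _
    have : ∀ i : Fin n, fderiv ℝ f x (eb n i) = gradient f x i := by
      intro i
      rw [congrFun (hFj i) x]
      exact inner_eb_right n _ i
    rw [Finset.sum_congr rfl (fun i _ => by rw [this i])]
    exact (euclid_norm_sq n (gradient f x)).symm
  have hLHSeq : (∫ x in ball x₀ ρ, ‖gradient f x‖ ^ (p + 2) * ξ x ^ 2) = ∫ x, P x := by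
    rw [setIntegral_eq_integral_of_forall_compl_eq_zero (by
      intro x hx
      have : ξ x = 0 := image_eq_zero_of_notMem_tsupport (fun h => hx (hKball h))
      simp [this])]
    apply integral_congr_ae
    apply Filter.Eventually.of_forall
    intro x
    show ‖gradient f x‖ ^ (p + 2) * ξ x ^ 2 = P x
    by_cases hx : x ∈ K
    · have hxU : x ∈ U := hU'U (hKU' hx)
      have hN0 : 0 < ‖gradient f x‖ :=
        norm_pos_iff.mpr (hU'g x (hKU' hx))
      have : P x = ξ x * ξ x * ‖gradient f x‖ ^ p
          * ∑ i : Fin n, (fderiv ℝ f x (eb n i)) ^ 2 := by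
        rw [hPdef, Finset.mul_sum]
        apply Finset.sum_congr rfl
        intro i _
        simp [hVdef]; ring
      rw [this, hsumsq x hxU]
      have hsplit : ‖gradient f x‖ ^ (p + 2) = ‖gradient f x‖ ^ p * ‖gradient f x‖ ^ (2:ℕ) := by
        rw [← Real.rpow_natCast ‖gradient f x‖ 2, ← Real.rpow_add hN0]
        norm_num
      rw [hsplit]; ring
    · have h2 : ∀ i : Fin n, V i x = 0 := fun i => hV0 i x hx
      have : ξ x = 0 := image_eq_zero_of_notMem_tsupport hx
      simp [hPdef, h2, this]
  -- oscillation bound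
  set M : ℝ := ⨆ x ∈ ball x₀ ρ, |f x - f x₀| with hMdef
  obtain ⟨C₀, hC₀⟩ := (isCompact_closedBall x₀ ρ).exists_bound_of_continuousOn
    (((hf.continuousOn.mono hsub)).sub continuousOn_const)
  have hbddM : BddAbove (Set.range fun x => ⨆ _ : x ∈ ball x₀ ρ, |f x - f x₀|) := by
    refine ⟨max C₀ 0, ?_⟩
    rintro - ⟨x, rfl⟩
    show (⨆ _ : x ∈ ball x₀ ρ, |f x - f x₀|) ≤ max C₀ 0
    by_cases hx : x ∈ ball x₀ ρ
    · rw [ciSup_pos (f := fun _ => |f x - f x₀|) hx]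
      refine le_trans ?_ (le_max_left _ _)
      have := hC₀ x (ball_subset_closedBall hx)
      simpa [Real.norm_eq_abs] using this
    · simp [hx]
  have hMbound : ∀ x ∈ ball x₀ ρ, |f x - f x₀| ≤ M := by
    intro x hx
    calc |f x - f x₀| = ⨆ _ : x ∈ ball x₀ ρ, |f x - f x₀| :=
          (ciSup_pos (f := fun _ => |f x - f x₀|) hx).symm
      _ ≤ M := by rw [hMdef]; exact le_ciSup hbddM x
  have hM0 : 0 ≤ M := le_trans (by simp) (hMbound x₀ (mem_ball_self hρ))
  -- the pointwise bound on the divergence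
  set R : Esp n → ℝ := fun x => 2 * |ξ x| * ‖gradient f x‖ ^ (p+1) * ‖gradient ξ x‖
    + (Real.sqrt n + p) * (ξ x ^ 2 * ‖gradient f x‖ ^ p * hessNorm n f x) with hRdef
  have hH0 : ∀ y, 0 ≤ hessNorm n f y := fun y => Real.sqrt_nonneg _
  have hDbound : ∀ x ∈ K, |D x| ≤ R x := by
    intro x hxK
    have hxU' : x ∈ U' := hKU' hxK
    have hxU : x ∈ U := hU'U hxU'
    have hg0 : gradient f x ≠ 0 := hU'g x hxU'
    have hN0 : 0 < ‖gradient f x‖ := norm_pos_iff.mpr hg0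
    have hgdiff : DifferentiableAt ℝ (gradient f) x :=
      (hgC1.contDiffAt (hU.mem_nhds hxU)).differentiableAt one_ne_zero
    set L := fderiv ℝ (gradient f) x with hLdef
    have hgd : HasFDerivAt (gradient f) L x := hgdiff.hasFDerivAt
    have hQd : HasFDerivAt (fun y => ⟪gradient f y, gradient f y⟫_ℝ)
        ((fderivInnerCLM ℝ (gradient f x, gradient f x)).comp (L.prod L)) x :=
      hgd.inner ℝ hgd
    have hQ0 : ⟪gradient f x, gradient f x⟫_ℝ ≠ 0 := by
      rw [real_inner_self_eq_norm_sq]; exact pow_ne_zero 2 (ne_of_gt hN0)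
    have hNp : HasFDerivAt (fun y => ‖gradient f y‖ ^ p)
        ((p/2 * ⟪gradient f x, gradient f x⟫_ℝ ^ (p/2 - 1)) •
          ((fderivInnerCLM ℝ (gradient f x, gradient f x)).comp (L.prod L))) x := by
      have hNp' := (Real.hasDerivAt_rpow_const (p := p/2) (Or.inl hQ0)).comp_hasFDerivAt x hQd
      refine hNp'.congr_of_eventuallyEq ?_
      filter_upwards with y
      simpa [Function.comp] using (hre y)
    have hξd : HasFDerivAt ξ (fderiv ℝ ξ x) x := (hξ.differentiable one_ne_zero x).hasFDerivAt
    have hFid : ∀ i : Fin n, HasFDerivAt (fun y => fderiv ℝ f y (eb n i))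
        ((fderivInnerCLM ℝ (gradient f x, eb n i)).comp
          (L.prod (0 : Esp n →L[ℝ] Esp n))) x := by
      intro i
      rw [hFj i]
      exact hgd.inner ℝ (hasFDerivAt_const (eb n i) x)
    have hVfd : ∀ i : Fin n, HasFDerivAt (V i) _ x :=
      fun i => ((hξd.mul hξd).mul hNp).mul (hFid i)
    -- Hessian entries
    set Hm : Fin n → Fin n → ℝ :=
      fun i j => fderiv ℝ (fun y => fderiv ℝ f y (eb n j)) x (eb n i) with hHmdef
    have hHL : ∀ i j : Fin n, Hm i j = ⟪L (eb n i), eb n j⟫_ℝ := by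
      intro i j
      show fderiv ℝ (fun y => fderiv ℝ f y (eb n j)) x (eb n i) = _
      rw [(hFid j).fderiv]
      simp [fderivInnerCLM_apply]
    have hFg : ∀ i : Fin n, fderiv ℝ f x (eb n i) = gradient f x i := by
      intro i
      rw [congrFun (hFj i) x]
      exact inner_eb_right n _ i
    have hinnerL : ∀ i : Fin n, ⟪gradient f x, L (eb n i)⟫_ℝ
        = ∑ j, gradient f x j * Hm i j := by
      intro i
      rw [inner_sum_repr]
      apply Finset.sum_congr rfl
      intro j _
      congr 1
      rw [hHL i j, ← inner_eb_right n (L (eb n i)) j]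
    have hQval : ⟪gradient f x, gradient f x⟫_ℝ ^ (p/2 - 1) = ‖gradient f x‖ ^ (p - 2) := by
      rw [real_inner_self_eq_norm_sq, ← Real.rpow_natCast ‖gradient f x‖ 2,
        ← Real.rpow_mul (norm_nonneg _)]
      congr 1
      push_cast
      ring
    have hfderivVi : ∀ i : Fin n, fderiv ℝ (V i) x (eb n i)
        = 2 * ξ x * fderiv ℝ ξ x (eb n i) * ‖gradient f x‖ ^ p * gradient f x i
          + ξ x ^ 2 * (p * ‖gradient f x‖ ^ (p - 2))
            * ((∑ j, gradient f x j * Hm i j) * gradient f x i)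
          + ξ x ^ 2 * ‖gradient f x‖ ^ p * Hm i i := by
      intro i
      rw [(hVfd i).fderiv]
      simp only [ContinuousLinearMap.add_apply, ContinuousLinearMap.smul_apply,
        ContinuousLinearMap.comp_apply, ContinuousLinearMap.prod_apply,
        ContinuousLinearMap.zero_apply, fderivInnerCLM_apply, smul_eq_mul,
        inner_zero_right, Pi.mul_apply, Pi.pow_apply]
      have hinnerL' : ⟪L (eb n i), gradient f x⟫_ℝ = ∑ j, gradient f x j * Hm i j :=
        (real_inner_comm _ _).trans (hinnerL i)
      rw [hQval]
      simp only [hinnerL i, hinnerL', hFg i, ← hHL i i]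
      ring
    -- the three sums
    set Sa : ℝ := ∑ i, fderiv ℝ ξ x (eb n i) * gradient f x i with hSadef
    set Sb : ℝ := ∑ i, gradient f x i * ∑ j, gradient f x j * Hm i j with hSbdef
    set Sc : ℝ := ∑ i, Hm i i with hScdef
    have hDval : D x = 2 * ξ x * ‖gradient f x‖ ^ p * Sa
        + ξ x ^ 2 * (p * ‖gradient f x‖ ^ (p - 2)) * Sb
        + ξ x ^ 2 * ‖gradient f x‖ ^ p * Sc := by
      show (∑ i, fderiv ℝ (V i) x (eb n i)) = _
      rw [Finset.sum_congr rfl (fun i _ => hfderivVi i), Finset.sum_add_distrib,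
        Finset.sum_add_distrib]
      have e1 : ∑ i : Fin n, 2 * ξ x * fderiv ℝ ξ x (eb n i) * ‖gradient f x‖ ^ p
            * gradient f x i = 2 * ξ x * ‖gradient f x‖ ^ p * Sa := by
        rw [hSadef, Finset.mul_sum]
        exact Finset.sum_congr rfl (fun i _ => by ring)
      have e2 : ∑ i : Fin n, ξ x ^ 2 * (p * ‖gradient f x‖ ^ (p - 2))
            * ((∑ j, gradient f x j * Hm i j) * gradient f x i)
          = ξ x ^ 2 * (p * ‖gradient f x‖ ^ (p - 2)) * Sb := by
        rw [hSbdef, Finset.mul_sum]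
        exact Finset.sum_congr rfl (fun i _ => by ring)
      have e3 : ∑ i : Fin n, ξ x ^ 2 * ‖gradient f x‖ ^ p * Hm i i
          = ξ x ^ 2 * ‖gradient f x‖ ^ p * Sc := by
        rw [hScdef, Finset.mul_sum]
      rw [e1, e2, e3]
    -- bounds on the sums
    have hHsq : hessNorm n f x ^ 2 = ∑ i, ∑ j, Hm i j ^ 2 := by
      rw [hessNorm, Real.sq_sqrt]
      positivity
    have hgsum : ∑ i, gradient f x i ^ 2 = ‖gradient f x‖ ^ 2 :=
      (euclid_norm_sq n (gradient f x)).symm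
    have hSa_le : |Sa| ≤ ‖gradient ξ x‖ * ‖gradient f x‖ := by
      have : Sa = ⟪gradient ξ x, gradient f x⟫_ℝ := by
        rw [hSadef, inner_sum_repr]
        apply Finset.sum_congr rfl
        intro i _
        congr 1
        rw [← inner_eb_right n (gradient ξ x) i]
        exact (InnerProductSpace.toDual_symm_apply).symm
      rw [this]
      exact abs_real_inner_le_norm _ _
    have hSb_le : |Sb| ≤ ‖gradient f x‖ ^ (2:ℕ) * hessNorm n f x := by
      have h1 : Sb ^ 2 ≤ (∑ i, gradient f x i ^ 2)
          * ∑ i, (∑ j, gradient f x j * Hm i j) ^ 2 := by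
        rw [hSbdef]
        exact Finset.sum_mul_sq_le_sq_mul_sq _ _ _
      have h2 : ∀ i : Fin n, (∑ j, gradient f x j * Hm i j) ^ 2
          ≤ ‖gradient f x‖ ^ 2 * ∑ j, Hm i j ^ 2 := by
        intro i
        calc (∑ j, gradient f x j * Hm i j) ^ 2
            ≤ (∑ j, gradient f x j ^ 2) * ∑ j, Hm i j ^ 2 :=
              Finset.sum_mul_sq_le_sq_mul_sq _ _ _
          _ = ‖gradient f x‖ ^ 2 * ∑ j, Hm i j ^ 2 := by rw [hgsum]
      have h3 : Sb ^ 2 ≤ (‖gradient f x‖ ^ (2:ℕ) * hessNorm n f x) ^ 2 := by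
        calc Sb ^ 2 ≤ (∑ i, gradient f x i ^ 2)
              * ∑ i, (∑ j, gradient f x j * Hm i j) ^ 2 := h1
          _ ≤ ‖gradient f x‖ ^ 2 * (‖gradient f x‖ ^ 2 * ∑ i, ∑ j, Hm i j ^ 2) := by
              rw [hgsum]
              apply mul_le_mul_of_nonneg_left _ (by positivity)
              calc ∑ i, (∑ j, gradient f x j * Hm i j) ^ 2
                  ≤ ∑ i, ‖gradient f x‖ ^ 2 * ∑ j, Hm i j ^ 2 :=
                    Finset.sum_le_sum (fun i _ => h2 i)
                _ = ‖gradient f x‖ ^ 2 * ∑ i, ∑ j, Hm i j ^ 2 := by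
                    rw [Finset.mul_sum]
          _ = (‖gradient f x‖ ^ (2:ℕ) * hessNorm n f x) ^ 2 := by
              rw [mul_pow, hHsq]; ring
      calc |Sb| = Real.sqrt (Sb ^ 2) := (Real.sqrt_sq_eq_abs Sb).symm
        _ ≤ Real.sqrt ((‖gradient f x‖ ^ (2:ℕ) * hessNorm n f x) ^ 2) :=
            Real.sqrt_le_sqrt h3
        _ = |‖gradient f x‖ ^ (2:ℕ) * hessNorm n f x| := Real.sqrt_sq_eq_abs _
        _ = ‖gradient f x‖ ^ (2:ℕ) * hessNorm n f x := by
            rw [abs_of_nonneg (mul_nonneg (by positivity) (hH0 x))]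
    have hSc_le : |Sc| ≤ Real.sqrt n * hessNorm n f x := by
      have h1 : Sc ^ 2 ≤ (n : ℝ) * ∑ i, Hm i i ^ 2 := by
        have := Finset.sum_mul_sq_le_sq_mul_sq Finset.univ (fun _ : Fin n => (1:ℝ))
          (fun i => Hm i i)
        simpa [hScdef] using this
      have h2 : ∑ i, Hm i i ^ 2 ≤ ∑ i, ∑ j, Hm i j ^ 2 :=
        Finset.sum_le_sum (fun i _ =>
          Finset.single_le_sum (f := fun j => Hm i j ^ 2)
            (fun j _ => sq_nonneg _) (Finset.mem_univ i))
      have h3 : Sc ^ 2 ≤ (Real.sqrt n * hessNorm n f x) ^ 2 := by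
        calc Sc ^ 2 ≤ (n : ℝ) * ∑ i, Hm i i ^ 2 := h1
          _ ≤ (n : ℝ) * ∑ i, ∑ j, Hm i j ^ 2 := by
              apply mul_le_mul_of_nonneg_left h2 (Nat.cast_nonneg n)
          _ = (Real.sqrt n * hessNorm n f x) ^ 2 := by
              rw [mul_pow, Real.sq_sqrt (Nat.cast_nonneg n), hHsq]
      calc |Sc| = Real.sqrt (Sc ^ 2) := (Real.sqrt_sq_eq_abs Sc).symm
        _ ≤ Real.sqrt ((Real.sqrt n * hessNorm n f x) ^ 2) := Real.sqrt_le_sqrt h3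
        _ = |Real.sqrt n * hessNorm n f x| := Real.sqrt_sq_eq_abs _
        _ = Real.sqrt n * hessNorm n f x := by
            rw [abs_of_nonneg (mul_nonneg (Real.sqrt_nonneg _) (hH0 x))]
    -- exponent arithmetic
    have hNp1 : ‖gradient f x‖ ^ p * ‖gradient f x‖ = ‖gradient f x‖ ^ (p + 1) := by
      rw [Real.rpow_add_one (ne_of_gt hN0)]
    have hNp2 : ‖gradient f x‖ ^ (p - 2) * ‖gradient f x‖ ^ (2:ℕ) = ‖gradient f x‖ ^ p := by
      rw [← Real.rpow_natCast ‖gradient f x‖ 2, ← Real.rpow_add hN0]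
      norm_num
    -- put everything together
    have hNppos : 0 ≤ ‖gradient f x‖ ^ p := Real.rpow_nonneg (norm_nonneg _) p
    have hb1 : |2 * ξ x * ‖gradient f x‖ ^ p * Sa|
        ≤ 2 * |ξ x| * ‖gradient f x‖ ^ (p + 1) * ‖gradient ξ x‖ := by
      rw [abs_mul, abs_mul, abs_mul, abs_of_nonneg (by norm_num : (0:ℝ) ≤ 2),
        abs_of_nonneg hNppos]
      calc 2 * |ξ x| * ‖gradient f x‖ ^ p * |Sa|
          ≤ 2 * |ξ x| * ‖gradient f x‖ ^ p * (‖gradient ξ x‖ * ‖gradient f x‖) := by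
            apply mul_le_mul_of_nonneg_left hSa_le (by positivity)
        _ = 2 * |ξ x| * (‖gradient f x‖ ^ p * ‖gradient f x‖) * ‖gradient ξ x‖ := by ring
        _ = 2 * |ξ x| * ‖gradient f x‖ ^ (p + 1) * ‖gradient ξ x‖ := by rw [hNp1]
    have hb2 : |ξ x ^ 2 * (p * ‖gradient f x‖ ^ (p - 2)) * Sb|
        ≤ p * (ξ x ^ 2 * ‖gradient f x‖ ^ p * hessNorm n f x) := by
      rw [abs_mul, abs_mul, abs_mul, abs_of_nonneg (sq_nonneg (ξ x)),
        abs_of_nonneg (by linarith : (0:ℝ) ≤ p),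
        abs_of_nonneg (Real.rpow_nonneg (norm_nonneg _) _)]
      calc ξ x ^ 2 * (p * ‖gradient f x‖ ^ (p - 2)) * |Sb|
          ≤ ξ x ^ 2 * (p * ‖gradient f x‖ ^ (p - 2))
            * (‖gradient f x‖ ^ (2:ℕ) * hessNorm n f x) := by
            apply mul_le_mul_of_nonneg_left hSb_le
            have : (0:ℝ) ≤ p := by linarith
            positivity
        _ = p * (ξ x ^ 2 * (‖gradient f x‖ ^ (p - 2) * ‖gradient f x‖ ^ (2:ℕ))
            * hessNorm n f x) := by ring
        _ = p * (ξ x ^ 2 * ‖gradient f x‖ ^ p * hessNorm n f x) := by rw [hNp2]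
    have hb3 : |ξ x ^ 2 * ‖gradient f x‖ ^ p * Sc|
        ≤ Real.sqrt n * (ξ x ^ 2 * ‖gradient f x‖ ^ p * hessNorm n f x) := by
      rw [abs_mul, abs_mul, abs_of_nonneg (sq_nonneg (ξ x)), abs_of_nonneg hNppos]
      calc ξ x ^ 2 * ‖gradient f x‖ ^ p * |Sc|
          ≤ ξ x ^ 2 * ‖gradient f x‖ ^ p * (Real.sqrt n * hessNorm n f x) := by
            apply mul_le_mul_of_nonneg_left hSc_le (by positivity)
        _ = Real.sqrt n * (ξ x ^ 2 * ‖gradient f x‖ ^ p * hessNorm n f x) := by ring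
    rw [hDval, hRdef]
    calc |2 * ξ x * ‖gradient f x‖ ^ p * Sa
          + ξ x ^ 2 * (p * ‖gradient f x‖ ^ (p - 2)) * Sb
          + ξ x ^ 2 * ‖gradient f x‖ ^ p * Sc|
        ≤ |2 * ξ x * ‖gradient f x‖ ^ p * Sa
            + ξ x ^ 2 * (p * ‖gradient f x‖ ^ (p - 2)) * Sb|
          + |ξ x ^ 2 * ‖gradient f x‖ ^ p * Sc| := abs_add_le _ _
      _ ≤ |2 * ξ x * ‖gradient f x‖ ^ p * Sa|
          + |ξ x ^ 2 * (p * ‖gradient f x‖ ^ (p - 2)) * Sb|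
          + |ξ x ^ 2 * ‖gradient f x‖ ^ p * Sc| := by
          have := abs_add_le (2 * ξ x * ‖gradient f x‖ ^ p * Sa)
            (ξ x ^ 2 * (p * ‖gradient f x‖ ^ (p - 2)) * Sb)
          linarith
      _ ≤ 2 * |ξ x| * ‖gradient f x‖ ^ (p+1) * ‖gradient ξ x‖
          + (Real.sqrt n + p) * (ξ x ^ 2 * ‖gradient f x‖ ^ p * hessNorm n f x) := by
          have h := hb1; have h2 := hb2; have h3 := hb3
          nlinarith [hb1, hb2, hb3]
  have hR0 : ∀ x ∉ K, R x = 0 := by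
    intro x hx
    have : ξ x = 0 := image_eq_zero_of_notMem_tsupport hx
    simp [hRdef, this]
  have hRnonneg : ∀ x, 0 ≤ R x := by
    intro x
    rw [hRdef]
    apply add_nonneg
    · positivity
    · apply mul_nonneg (by positivity)
      exact mul_nonneg (by positivity) (hH0 x)
  have hHcont : ContinuousOn (hessNorm n f) U := by
    apply Real.continuous_sqrt.comp_continuousOn
    apply continuousOn_finset_sum
    intro i _
    apply continuousOn_finset_sum
    intro j _
    have hfdj : ContDiffOn ℝ 1 (fun y => fderiv ℝ f y (eb n j)) U :=
      hfd.clm_apply contDiffOn_const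
    exact (((hfdj.continuousOn_fderiv_of_isOpen hU le_rfl)).clm_apply continuousOn_const).pow 2
  have hNrpow : ∀ q : ℝ, ContinuousOn (fun x => ‖gradient f x‖ ^ q) U' := by
    intro q
    apply ContinuousOn.rpow_const ((hgradcont.mono hU'U).norm)
    intro x hx; exact Or.inl (norm_ne_zero_iff.mpr (hU'g x hx))
  have hgradξcont : Continuous fun x => gradient ξ x :=
    (InnerProductSpace.toDual ℝ (Esp n)).symm.continuous.comp (hξ.continuous_fderiv one_ne_zero)
  have hRcont : Continuous R := by
    apply glue_continuous hU'open hKcl hKU' ?_ hR0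
    apply ContinuousOn.add
    · exact ((continuous_const.mul hξ.continuous.abs).continuousOn.mul (hNrpow (p+1))).mul
        hgradξcont.norm.continuousOn
    · exact continuousOn_const.mul
        (((hξ.continuous.pow 2).continuousOn.mul (hNrpow p)).mul (hHcont.mono hU'U))
  have hRcs : HasCompactSupport R := by
    apply HasCompactSupport.of_support_subset_isCompact hKc
    intro x hx
    by_contra hxK
    exact hx (hR0 x hxK)
  have hRint : Integrable R volume := hRcont.integrable_of_hasCompactSupport hRcs
  -- step: I ≤ M * ∫ R
  have hstep1 : (∫ x in ball x₀ ρ, ‖gradient f x‖ ^ (p + 2) * ξ x ^ 2)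
      ≤ M * ∫ x, R x := by
    rw [hLHSeq, hIBP]
    calc - ∫ x, (f x - f x₀) * D x ≤ |∫ x, (f x - f x₀) * D x| := neg_le_abs _
      _ ≤ ∫ x, |f x - f x₀| * |D x| := by
          simpa [Real.norm_eq_abs] using norm_integral_le_integral_norm
            (fun x => (f x - f x₀) * D x) (μ := volume)
      _ ≤ ∫ x, M * R x := by
          apply integral_mono (by simpa [abs_mul] using hhDint.abs) (hRint.const_mul M)
          intro x
          by_cases hx : x ∈ K
          · exact mul_le_mul (hMbound x (hKball hx)) (hDbound x hx) (abs_nonneg _) hM0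
          · simp only [hD0 x hx, mul_zero, abs_zero]
            exact mul_nonneg hM0 (hRnonneg x)
      _ = M * ∫ x, R x := integral_const_mul M R
  -- ∫ R over ℝⁿ = over ball
  have hReq : (∫ x, R x) = ∫ x in ball x₀ ρ, R x := by
    rw [setIntegral_eq_integral_of_forall_compl_eq_zero]
    intro x hx
    exact hR0 x (fun hK => hx (hKball hK))
  -- continuity toolkit on the closed ball
  have hξc : Continuous ξ := hξ.continuous
  have hNcb : ∀ q : ℝ, ContinuousOn (fun x => ‖gradient f x‖ ^ q) (closedBall x₀ ρ) :=
    fun q => (hNrpow q).mono hcbU'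
  have hHcb : ContinuousOn (hessNorm n f) (closedBall x₀ ρ) := hHcont.mono hsub
  have hmkint : ∀ u : Esp n → ℝ, ContinuousOn u (closedBall x₀ ρ) →
      IntegrableOn u (ball x₀ ρ) volume := fun u hu =>
    (hu.integrableOn_compact (isCompact_closedBall _ _)).mono_set ball_subset_closedBall
  have hNpos : ∀ x ∈ ball x₀ ρ, 0 < ‖gradient f x‖ := fun x hx =>
    norm_pos_iff.mpr (hgrad x (ball_subset_closedBall hx))
  -- the three L² functions
  set u₁ : Esp n → ℝ := fun x => |ξ x| * ‖gradient f x‖ ^ ((p-2)/2) * hessNorm n f x with hu₁def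
  set u₂ : Esp n → ℝ := fun x => ‖gradient f x‖ ^ (p/2) * ‖gradient ξ x‖ with hu₂def
  set w₀ : Esp n → ℝ := fun x => |ξ x| * ‖gradient f x‖ ^ ((p+2)/2) with hw₀def
  have hu₁cb : ContinuousOn u₁ (closedBall x₀ ρ) :=
    ((hξc.abs.continuousOn.mul (hNcb ((p-2)/2))).mul hHcb)
  have hu₂cb : ContinuousOn u₂ (closedBall x₀ ρ) :=
    (hNcb (p/2)).mul hgradξcont.norm.continuousOn
  have hw₀cb : ContinuousOn w₀ (closedBall x₀ ρ) :=
    hξc.abs.continuousOn.mul (hNcb ((p+2)/2))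
  -- squares
  have hu₁sq : ∀ x ∈ ball x₀ ρ, u₁ x ^ 2
      = ‖gradient f x‖ ^ (p - 2) * hessNorm n f x ^ 2 * ξ x ^ 2 := by
    intro x hx
    have h1 : (‖gradient f x‖ ^ ((p-2)/2)) ^ (2:ℕ) = ‖gradient f x‖ ^ (p-2) := by
      rw [rpow_sq_eq (norm_nonneg _)]; congr 1; ring
    calc u₁ x ^ 2 = |ξ x| ^ (2:ℕ) * ((‖gradient f x‖ ^ ((p-2)/2)) ^ (2:ℕ))
          * hessNorm n f x ^ 2 := by rw [hu₁def]; ring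
      _ = _ := by rw [h1, sq_abs]; ring
  have hu₂sq : ∀ x ∈ ball x₀ ρ, u₂ x ^ 2
      = ‖gradient f x‖ ^ p * ‖gradient ξ x‖ ^ 2 := by
    intro x hx
    have h1 : (‖gradient f x‖ ^ (p/2)) ^ (2:ℕ) = ‖gradient f x‖ ^ p := by
      rw [rpow_sq_eq (norm_nonneg _)]; congr 1; ring
    calc u₂ x ^ 2 = ((‖gradient f x‖ ^ (p/2)) ^ (2:ℕ)) * ‖gradient ξ x‖ ^ 2 := by
          rw [hu₂def]; ring
      _ = _ := by rw [h1]
  have hw₀sq : ∀ x ∈ ball x₀ ρ, w₀ x ^ 2 = ‖gradient f x‖ ^ (p + 2) * ξ x ^ 2 := by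
    intro x hx
    have h1 : (‖gradient f x‖ ^ ((p+2)/2)) ^ (2:ℕ) = ‖gradient f x‖ ^ (p+2) := by
      rw [rpow_sq_eq (norm_nonneg _)]; congr 1; ring
    calc w₀ x ^ 2 = |ξ x| ^ (2:ℕ) * ((‖gradient f x‖ ^ ((p+2)/2)) ^ (2:ℕ)) := by
          rw [hw₀def]; ring
      _ = _ := by rw [h1, sq_abs]; ring
  -- products
  have hprod1 : ∀ x ∈ ball x₀ ρ, u₁ x * w₀ x
      = ξ x ^ 2 * ‖gradient f x‖ ^ p * hessNorm n f x := by
    intro x hx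
    have h1 : ‖gradient f x‖ ^ ((p-2)/2) * ‖gradient f x‖ ^ ((p+2)/2)
        = ‖gradient f x‖ ^ p := by
      rw [← Real.rpow_add (hNpos x hx)]; congr 1; ring
    calc u₁ x * w₀ x = (|ξ x| * |ξ x|)
          * (‖gradient f x‖ ^ ((p-2)/2) * ‖gradient f x‖ ^ ((p+2)/2))
          * hessNorm n f x := by rw [hu₁def, hw₀def]; ring
      _ = _ := by rw [h1, abs_mul_abs_self]; ring
  have hprod2 : ∀ x ∈ ball x₀ ρ, u₂ x * w₀ x
      = |ξ x| * ‖gradient f x‖ ^ (p+1) * ‖gradient ξ x‖ := by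
    intro x hx
    have h1 : ‖gradient f x‖ ^ (p/2) * ‖gradient f x‖ ^ ((p+2)/2)
        = ‖gradient f x‖ ^ (p+1) := by
      rw [← Real.rpow_add (hNpos x hx)]; congr 1; ring
    calc u₂ x * w₀ x = (‖gradient f x‖ ^ (p/2) * ‖gradient f x‖ ^ ((p+2)/2))
          * |ξ x| * ‖gradient ξ x‖ := by rw [hu₂def, hw₀def]; ring
      _ = _ := by rw [h1]; ring
  -- named integrals
  set IA : ℝ := ∫ x in ball x₀ ρ,
    ‖gradient f x‖ ^ (p - 2) * hessNorm n f x ^ 2 * ξ x ^ 2 with hIAdef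
  set IB : ℝ := ∫ x in ball x₀ ρ, ‖gradient f x‖ ^ p * ‖gradient ξ x‖ ^ 2 with hIBdef
  set II : ℝ := ∫ x in ball x₀ ρ, ‖gradient f x‖ ^ (p + 2) * ξ x ^ 2 with hIIdef
  have hIAint : IntegrableOn (fun x => ‖gradient f x‖ ^ (p - 2) * hessNorm n f x ^ 2 * ξ x ^ 2)
      (ball x₀ ρ) volume :=
    hmkint _ (((hNcb (p-2)).mul (hHcb.pow 2)).mul (hξc.pow 2).continuousOn)
  have hIBint : IntegrableOn (fun x => ‖gradient f x‖ ^ p * ‖gradient ξ x‖ ^ 2)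
      (ball x₀ ρ) volume :=
    hmkint _ ((hNcb p).mul (hgradξcont.norm.pow 2).continuousOn)
  have hIA0 : 0 ≤ IA := by
    rw [hIAdef]
    apply setIntegral_nonneg measurableSet_ball
    intro x hx
    exact mul_nonneg (mul_nonneg (Real.rpow_nonneg (norm_nonneg _) _) (sq_nonneg _)) (sq_nonneg _)
  have hIB0 : 0 ≤ IB := by
    rw [hIBdef]
    apply setIntegral_nonneg measurableSet_ball
    intro x hx
    exact mul_nonneg (Real.rpow_nonneg (norm_nonneg _) _) (sq_nonneg _)
  have hII0 : 0 ≤ II := by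
    rw [hIIdef]
    apply setIntegral_nonneg measurableSet_ball
    intro x hx
    exact mul_nonneg (Real.rpow_nonneg (norm_nonneg _) _) (sq_nonneg _)
  -- integral identities for the squares
  have hIu₁ : ∫ x in ball x₀ ρ, u₁ x ^ 2 = IA := by
    rw [hIAdef]; exact setIntegral_congr_fun measurableSet_ball (fun x hx => hu₁sq x hx)
  have hIu₂ : ∫ x in ball x₀ ρ, u₂ x ^ 2 = IB := by
    rw [hIBdef]; exact setIntegral_congr_fun measurableSet_ball (fun x hx => hu₂sq x hx)
  have hIw₀ : ∫ x in ball x₀ ρ, w₀ x ^ 2 = II := by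
    rw [hIIdef]; exact setIntegral_congr_fun measurableSet_ball (fun x hx => hw₀sq x hx)
  -- Cauchy-Schwarz applications
  have hcsgen : ∀ u w : Esp n → ℝ, ContinuousOn u (closedBall x₀ ρ) →
      ContinuousOn w (closedBall x₀ ρ) → (∀ x ∈ ball x₀ ρ, 0 ≤ u x) →
      (∀ x ∈ ball x₀ ρ, 0 ≤ w x) →
      ∫ x in ball x₀ ρ, u x * w x
        ≤ Real.sqrt (∫ x in ball x₀ ρ, u x ^ 2) * Real.sqrt (∫ x in ball x₀ ρ, w x ^ 2) := by
    intro u w hu hw hu0 hw0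
    obtain ⟨Cu, hCu⟩ := (isCompact_closedBall x₀ ρ).exists_bound_of_continuousOn hu
    obtain ⟨Cw, hCw⟩ := (isCompact_closedBall x₀ ρ).exists_bound_of_continuousOn hw
    apply cs_integral (ball x₀ ρ) measurableSet_ball measure_ball_lt_top.ne u w
      ((hu.mono ball_subset_closedBall).aestronglyMeasurable measurableSet_ball)
      ((hw.mono ball_subset_closedBall).aestronglyMeasurable measurableSet_ball)
      Cu Cw
      (fun x hx => by simpa [Real.norm_eq_abs] using hCu x (ball_subset_closedBall hx))
      (fun x hx => by simpa [Real.norm_eq_abs] using hCw x (ball_subset_closedBall hx))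
      hu0 hw0
  have hu₁0 : ∀ x ∈ ball x₀ ρ, 0 ≤ u₁ x := fun x hx =>
    mul_nonneg (mul_nonneg (abs_nonneg _) (Real.rpow_nonneg (norm_nonneg _) _)) (hH0 x)
  have hu₂0 : ∀ x ∈ ball x₀ ρ, 0 ≤ u₂ x := fun x hx =>
    mul_nonneg (Real.rpow_nonneg (norm_nonneg _) _) (norm_nonneg _)
  have hw₀0 : ∀ x ∈ ball x₀ ρ, 0 ≤ w₀ x := fun x hx =>
    mul_nonneg (abs_nonneg _) (Real.rpow_nonneg (norm_nonneg _) _)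
  have hCS1 : ∫ x in ball x₀ ρ, ξ x ^ 2 * ‖gradient f x‖ ^ p * hessNorm n f x
      ≤ Real.sqrt IA * Real.sqrt II := by
    rw [← hIu₁, ← hIw₀,
      ← setIntegral_congr_fun measurableSet_ball (fun x hx => hprod1 x hx)]
    exact hcsgen u₁ w₀ hu₁cb hw₀cb hu₁0 hw₀0
  have hCS2 : ∫ x in ball x₀ ρ, |ξ x| * ‖gradient f x‖ ^ (p+1) * ‖gradient ξ x‖
      ≤ Real.sqrt IB * Real.sqrt II := by
    rw [← hIu₂, ← hIw₀,
      ← setIntegral_congr_fun measurableSet_ball (fun x hx => hprod2 x hx)]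
    exact hcsgen u₂ w₀ hu₂cb hw₀cb hu₂0 hw₀0
  -- split ∫ R
  have ht1int : IntegrableOn (fun x => 2 * |ξ x| * ‖gradient f x‖ ^ (p+1) * ‖gradient ξ x‖)
      (ball x₀ ρ) volume :=
    hmkint _ (((continuous_const.mul hξc.abs).continuousOn.mul (hNcb (p+1))).mul
      hgradξcont.norm.continuousOn)
  have ht2int : IntegrableOn
      (fun x => (Real.sqrt n + p) * (ξ x ^ 2 * ‖gradient f x‖ ^ p * hessNorm n f x))
      (ball x₀ ρ) volume :=
    hmkint _ (continuousOn_const.mul (((hξc.pow 2).continuousOn.mul (hNcb p)).mul hHcb))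
  have hRsplit : ∫ x in ball x₀ ρ, R x
      ≤ 2 * (Real.sqrt IB * Real.sqrt II) + (Real.sqrt n + p) * (Real.sqrt IA * Real.sqrt II) := by
    have e : ∫ x in ball x₀ ρ, R x
        = (∫ x in ball x₀ ρ, 2 * |ξ x| * ‖gradient f x‖ ^ (p+1) * ‖gradient ξ x‖)
          + ∫ x in ball x₀ ρ,
            (Real.sqrt n + p) * (ξ x ^ 2 * ‖gradient f x‖ ^ p * hessNorm n f x) := by
      rw [hRdef, ← integral_add ht1int ht2int]
    rw [e]
    have e1 : ∫ x in ball x₀ ρ, 2 * |ξ x| * ‖gradient f x‖ ^ (p+1) * ‖gradient ξ x‖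
        = 2 * ∫ x in ball x₀ ρ, |ξ x| * ‖gradient f x‖ ^ (p+1) * ‖gradient ξ x‖ := by
      rw [← integral_const_mul]
      apply setIntegral_congr_fun measurableSet_ball
      intro x hx; ring
    have e2 : ∫ x in ball x₀ ρ,
        (Real.sqrt n + p) * (ξ x ^ 2 * ‖gradient f x‖ ^ p * hessNorm n f x)
        = (Real.sqrt n + p) * ∫ x in ball x₀ ρ,
            ξ x ^ 2 * ‖gradient f x‖ ^ p * hessNorm n f x := integral_const_mul _ _
    rw [e1, e2]
    have hsp : 0 ≤ Real.sqrt n + p := by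
      have := Real.sqrt_nonneg (n:ℝ); linarith
    have := mul_le_mul_of_nonneg_left hCS2 (by norm_num : (0:ℝ) ≤ 2)
    have := mul_le_mul_of_nonneg_left hCS1 hsp
    linarith
  -- finish with algebra
  have hsqn : (1:ℝ) ≤ Real.sqrt n := by
    have h1 : (1:ℝ) ≤ (n:ℝ) := by exact_mod_cast hn
    calc (1:ℝ) = Real.sqrt 1 := Real.sqrt_one.symm
      _ ≤ Real.sqrt n := Real.sqrt_le_sqrt h1
  have hsA : Real.sqrt IA ^ 2 = IA := Real.sq_sqrt hIA0
  have hsB : Real.sqrt IB ^ 2 = IB := Real.sq_sqrt hIB0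
  have hsI : Real.sqrt II ^ 2 = II := Real.sq_sqrt hII0
  set a : ℝ := M * (Real.sqrt n + p) * Real.sqrt IA with hadef
  set b : ℝ := 2 * M * Real.sqrt IB with hbdef
  have hsp : 0 ≤ Real.sqrt n + p := by
    have := Real.sqrt_nonneg (n:ℝ); linarith
  have ha0 : 0 ≤ a := by
    rw [hadef]; exact mul_nonneg (mul_nonneg hM0 hsp) (Real.sqrt_nonneg _)
  have hb0 : 0 ≤ b := by
    rw [hbdef]; positivity
  have hkey : II ≤ (a + b) * Real.sqrt II := by
    have h1 : II ≤ M * ∫ x, R x := hstep1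
    have h2 : M * (∫ x, R x) ≤ M * (2 * (Real.sqrt IB * Real.sqrt II)
        + (Real.sqrt n + p) * (Real.sqrt IA * Real.sqrt II)) := by
      apply mul_le_mul_of_nonneg_left _ hM0
      rw [hReq]; exact hRsplit
    calc II ≤ M * (2 * (Real.sqrt IB * Real.sqrt II)
          + (Real.sqrt n + p) * (Real.sqrt IA * Real.sqrt II)) := le_trans h1 h2
      _ = (a + b) * Real.sqrt II := by rw [hadef, hbdef]; ring
  have hsle : Real.sqrt II ≤ a + b := by
    rcases eq_or_lt_of_le (Real.sqrt_nonneg II) with h | h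
    · rw [← h]; exact add_nonneg ha0 hb0
    · apply le_of_mul_le_mul_right _ h
      calc Real.sqrt II * Real.sqrt II = II := Real.mul_self_sqrt hII0
        _ ≤ (a + b) * Real.sqrt II := hkey
  have hIIle : II ≤ 2 * a^2 + 2 * b^2 := by
    have h1 : II ≤ (a + b)^2 := by
      calc II = Real.sqrt II ^ 2 := hsI.symm
        _ ≤ (a + b)^2 := by
            apply pow_le_pow_left₀ (Real.sqrt_nonneg _) hsle
      
    nlinarith [sq_nonneg (a - b)]
  have hfin : II ≤ 2 * (Real.sqrt n + p)^2 * M^2 * (IA + IB) := by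
    have ha2 : a^2 = M^2 * (Real.sqrt n + p)^2 * IA := by
      rw [hadef, mul_pow, mul_pow, hsA]
    have hb2 : b^2 = 4 * M^2 * IB := by
      rw [hbdef, mul_pow, mul_pow, hsB]; ring
    have h4 : (4:ℝ) ≤ (Real.sqrt n + p)^2 := by nlinarith
    nlinarith [mul_nonneg (mul_nonneg (sq_nonneg M) hIB0) (le_of_lt (by nlinarith : (0:ℝ) < 1)),
      sq_nonneg M, mul_nonneg (sq_nonneg M) hIB0]
  have hsum : ∫ x in ball x₀ ρ,
      (‖gradient f x‖ ^ (p - 2) * hessNorm n f x ^ 2 * ξ x ^ 2 +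
        ‖gradient f x‖ ^ p * ‖gradient ξ x‖ ^ 2) = IA + IB := by
    rw [hIAdef, hIBdef, ← integral_add hIAint hIBint]
  rw [hsum]
  calc II ≤ 2 * (Real.sqrt n + p)^2 * M^2 * (IA + IB) := hfin
    _ = 2 * (Real.sqrt n + p)^2 * M^2 * (IA + IB) := rfl
end
end

section
/- Let n ≥ 1 be an integer, R > 0, q > p > 0 and γ > 0, and let f : ℝⁿ → ℝ be measurable and essentially bounded on B_R. Assume that for every r ∈ (0, R) and every σ ∈ (0,1): esssup_{B_{(1−σ)r}} |f| ≤ γ (σr)^{−n/q} ( ∫_{B_r} |f|^q dx )^{1/q}. Then esssup_{B_{R/2}} |f| ≤ γ′ R^{−n/p} ( ∫_{B_R} |f|^p dx )^{1/p}, where γ′ = (p/(q−p)) · 2^{n/p} · ( 2^{n/p + 1} ((q−p)/q) γ )^{q/p}. -/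
open MeasureTheory Metric Real
open scoped InnerProductSpace Topology
open Filter

noncomputable section

lemma aux_hasDeriv (v : ℝ) (hv : 0 < v) :
    HasDerivAt (fun w : ℝ => w * Real.log w - (w+1) * Real.log ((w+1)/2))
      (Real.log v - Real.log ((v+1)/2)) v := by
  have hv1 : 0 < v + 1 := by linarith
  have h1 : HasDerivAt (fun w : ℝ => w * Real.log w) (Real.log v + 1) v :=
    Real.hasDerivAt_mul_log (ne_of_gt hv)
  have h2 : HasDerivAt (fun w : ℝ => (w+1)/2) (1/2) v := by
    simpa using ((hasDerivAt_id v).add_const 1).div_const 2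
  have h3 : HasDerivAt (fun w : ℝ => Real.log ((w+1)/2)) ((1/((v+1)/2)) * (1/2)) v := by
    have := (Real.hasDerivAt_log (by positivity : ((v:ℝ)+1)/2 ≠ 0)).comp v h2
    simpa [one_div, Function.comp_def] using this
  have h4 : HasDerivAt (fun w : ℝ => (w+1) * Real.log ((w+1)/2))
      (1 * Real.log ((v+1)/2) + (v+1) * ((1/((v+1)/2)) * (1/2))) v :=
    ((hasDerivAt_id v).add_const 1).mul h3
  have h5 := h1.sub h4
  refine HasDerivAt.congr_deriv h5 ?_
  field_simp
  ring

lemma aux_log_ineq {u : ℝ} (hu : 0 < u) :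
    (u+1) * Real.log ((u+1)/2) ≤ u * Real.log u := by
  set g : ℝ → ℝ := fun w : ℝ => w * Real.log w - (w+1) * Real.log ((w+1)/2) with hg
  have hg1 : g 1 = 0 := by norm_num [hg]
  have key : 0 ≤ g u := by
    rcases le_or_gt 1 u with h1 | h1
    · have hmono : MonotoneOn g (Set.Ici 1) := by
        apply monotoneOn_of_deriv_nonneg (convex_Ici 1)
        · intro x hx
          exact (aux_hasDeriv x (by simp at hx; linarith)).continuousAt.continuousWithinAt
        · intro x hx
          rw [interior_Ici] at hx
          exact (aux_hasDeriv x (by simp at hx; linarith)).differentiableAt.differentiableWithinAt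
        · intro x hx
          rw [interior_Ici] at hx
          simp only [Set.mem_Ioi] at hx
          have hx0 : (0:ℝ) < x := by linarith
          rw [(aux_hasDeriv x hx0).deriv]
          have : Real.log ((x+1)/2) ≤ Real.log x :=
            Real.log_le_log (by positivity) (by linarith)
          linarith
      have := hmono (Set.mem_Ici.2 le_rfl) (Set.mem_Ici.2 h1) h1
      rw [hg1] at this; exact this
    · have hanti : AntitoneOn g (Set.Ioc 0 1) := by
        apply antitoneOn_of_deriv_nonpos (convex_Ioc 0 1)
        · intro x hx
          exact (aux_hasDeriv x hx.1).continuousAt.continuousWithinAt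
        · intro x hx
          rw [interior_Ioc] at hx
          exact (aux_hasDeriv x hx.1).differentiableAt.differentiableWithinAt
        · intro x hx
          rw [interior_Ioc] at hx
          rw [(aux_hasDeriv x hx.1).deriv]
          have : Real.log x ≤ Real.log ((x+1)/2) :=
            Real.log_le_log hx.1 (by linarith [hx.2])
          linarith
      have := hanti (Set.mem_Ioc.2 ⟨hu, h1.le⟩) (Set.mem_Ioc.2 ⟨one_pos, le_rfl⟩) h1.le
      rw [hg1] at this; exact this
  simp only [hg] at key; linarith

lemma key_pow {t : ℝ} (ht : 1 < t) : t ^ t ≤ 2 ^ t * (t - 1) ^ (t - 1) := by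
  have hu : 0 < t - 1 := sub_pos.2 ht
  have ht0 : 0 < t := lt_trans one_pos ht
  have h := aux_log_ineq hu
  rw [show t - 1 + 1 = t by ring] at h
  have hlog : Real.log (t/2) = Real.log t - Real.log 2 :=
    Real.log_div (ne_of_gt ht0) two_ne_zero
  rw [Real.rpow_def_of_pos ht0, Real.rpow_def_of_pos two_pos, Real.rpow_def_of_pos hu,
    ← Real.exp_add]
  apply Real.exp_le_exp.2
  rw [hlog] at h
  nlinarith [h]

lemma key_ineq {p q : ℝ} (hp : 0 < p) (hpq : p < q) :
    1 ≤ p/(q-p) * (2 * ((q-p)/q)) ^ (q/p) := by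
  have hq : 0 < q := lt_trans hp hpq
  have ht : 1 < q/p := (one_lt_div hp).2 hpq
  set t := q/p with htdef
  have hu : 0 < t - 1 := sub_pos.2 ht
  have ht0 : 0 < t := lt_trans one_pos ht
  have hθ : 2 * ((q-p)/q) = 2*(t-1)/t := by
    rw [htdef]; field_simp
  have hc : p/(q-p) = 1/(t-1) := by
    rw [htdef]; field_simp
  rw [hθ, hc]
  have hkey := key_pow ht
  have h1 : (2*(t-1)/t) ^ t = 2 ^ t * (t-1) ^ t / t ^ t := by
    rw [Real.div_rpow (by positivity) ht0.le, Real.mul_rpow (by norm_num) hu.le]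
  have h2 : (t-1) ^ t = (t-1) ^ (t-1) * (t-1) := by
    have h2' := Real.rpow_add hu (t-1) 1
    rw [Real.rpow_one, show t - 1 + 1 = t by ring] at h2'
    exact h2'
  have htt : (0:ℝ) < t ^ t := Real.rpow_pos_of_pos ht0 t
  have h3 : t - 1 ≤ (2*(t-1)/t) ^ t := by
    rw [h1, le_div_iff₀ htt, h2]
    calc (t-1) * t ^ t ≤ (t-1) * (2 ^ t * (t-1)^(t-1)) := by
          apply mul_le_mul_of_nonneg_left hkey hu.le
      _ = 2 ^ t * ((t-1)^(t-1) * (t-1)) := by ring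
  rw [one_div]
  calc (1:ℝ) = (t-1)⁻¹ * (t-1) := by field_simp
    _ ≤ (t-1)⁻¹ * (2*(t-1)/t) ^ t := by
        apply mul_le_mul_of_nonneg_left h3 (by positivity)

/-- **Lemma 3.2.** If `f` is measurable and essentially bounded on `B_R` and
`esssup_{B_{(1-σ)r}} |f| ≤ γ (σr)^{-n/q} (∫_{B_r} |f|^q)^{1/q}` for all `r ∈ (0,R)`,
`σ ∈ (0,1)`, then `esssup_{B_{R/2}} |f| ≤ γ′ R^{-n/p} (∫_{B_R} |f|^p)^{1/p}` where
`γ′ = (p/(q-p)) 2^{n/p} (2^{n/p+1} ((q-p)/q) γ)^{q/p}`. -/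
theorem statement8 (n : ℕ) (hn : 1 ≤ n) (R p q γ : ℝ) (hR : 0 < R) (hp : 0 < p)
    (hpq : p < q) (hγ : 0 < γ) (f : Esp n → ℝ) (hmeas : Measurable f)
    (hbdd : ∃ M : ℝ, ∀ᵐ x ∂(volume.restrict (ball (0 : Esp n) R)), |f x| ≤ M)
    (hiter : ∀ r ∈ Set.Ioo (0 : ℝ) R, ∀ σ ∈ Set.Ioo (0 : ℝ) 1,
      essSup (fun x => |f x|) (volume.restrict (ball (0 : Esp n) ((1 - σ) * r)))
        ≤ γ * (σ * r) ^ (-(n : ℝ) / q) *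
            (∫ x in ball (0 : Esp n) r, |f x| ^ q) ^ (1 / q)) :
    essSup (fun x => |f x|) (volume.restrict (ball (0 : Esp n) (R / 2)))
      ≤ (p / (q - p)) * 2 ^ ((n : ℝ) / p) *
          ((2 : ℝ) ^ ((n : ℝ) / p + 1) * ((q - p) / q) * γ) ^ (q / p) *
          R ^ (-(n : ℝ) / p) * (∫ x in ball (0 : Esp n) R, |f x| ^ p) ^ (1 / p) := by
  have hq : 0 < q := hp.trans hpq
  set A := ∫ x in ball (0 : Esp n) R, |f x| ^ p with hAdef
  set θ := (q - p) / q with hθdef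
  have hθpos : 0 < θ := div_pos (by linarith) hq
  have hθlt : θ < 1 := by rw [hθdef, div_lt_one hq]; linarith
  have hA0 : 0 ≤ A := integral_nonneg fun x => Real.rpow_nonneg (abs_nonneg _) _
  set Z : ℝ → ℝ := fun r => essSup (fun x => |f x|) (volume.restrict (ball (0 : Esp n) r))
    with hZdef
  show Z (R/2) ≤ _
  clear_value A θ Z
  obtain ⟨M, hM⟩ := hbdd
  set M₀ := max M 1 with hM₀def
  have hM₀1 : (1:ℝ) ≤ M₀ := le_max_right _ _
  have hM₀pos : (0:ℝ) < M₀ := lt_of_lt_of_le one_pos hM₀1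
  have hMae : ∀ᵐ x ∂(volume.restrict (ball (0 : Esp n) R)), |f x| ≤ M₀ :=
    hM.mono fun x hx => hx.trans (le_max_left _ _)
  have hres : ∀ {r : ℝ}, r ≤ R →
      ∀ᵐ x ∂(volume.restrict (ball (0 : Esp n) r)), |f x| ≤ M₀ := fun {r} h =>
    ae_restrict_of_ae_restrict_of_subset (ball_subset_ball h) hMae
  have hne : ∀ r : ℝ, 0 < r → (ae (volume.restrict (ball (0 : Esp n) r))).NeBot := by
    intro r hr
    rw [ae_neBot, Ne, Measure.restrict_eq_zero]
    exact (measure_ball_pos _ _ hr).ne'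
  have hZle : ∀ r : ℝ, 0 < r → ∀ c : ℝ,
      (∀ᵐ x ∂(volume.restrict (ball (0 : Esp n) r)), |f x| ≤ c) → Z r ≤ c := by
    intro r hr c hc
    haveI := hne r hr
    rw [hZdef]
    exact Filter.limsup_le_of_le
      (Filter.isCoboundedUnder_le_of_le _ (fun x => abs_nonneg (f x))) hc
  have hZM : ∀ r : ℝ, 0 < r → r ≤ R → Z r ≤ M₀ := fun r hr hrR => hZle r hr M₀ (hres hrR)
  have haeZ : ∀ r : ℝ, 0 < r → r ≤ R →
      ∀ᵐ x ∂(volume.restrict (ball (0 : Esp n) r)), |f x| ≤ Z r := by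
    intro r hr hrR
    rw [hZdef]
    exact ae_le_essSup ⟨M₀, by simpa [Filter.eventually_map] using hres hrR⟩
  have hZ0 : ∀ r : ℝ, 0 < r → r ≤ R → 0 ≤ Z r := by
    intro r hr hrR
    haveI := hne r hr
    obtain ⟨x, hx⟩ := (haeZ r hr hrR).exists
    exact le_trans (abs_nonneg (f x)) hx
  -- integrability
  haveI hfinR : IsFiniteMeasure (volume.restrict (ball (0 : Esp n) R)) :=
    ⟨by rw [Measure.restrict_apply_univ]; exact measure_ball_lt_top⟩
  have hint : ∀ s : ℝ, 0 < s → IntegrableOn (fun x => |f x| ^ s) (ball (0 : Esp n) R) volume := by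
    intro s hs
    apply Integrable.mono' (integrable_const (M₀ ^ s))
    · exact (hmeas.abs.pow_const s).aestronglyMeasurable
    · refine (hres le_rfl).mono fun x hx => ?_
      rw [Real.norm_eq_abs, abs_of_nonneg (Real.rpow_nonneg (abs_nonneg _) _)]
      exact Real.rpow_le_rpow (abs_nonneg _) hx hs.le
  -- main integral estimate
  have hF6 : ∀ r : ℝ, 0 < r → r ≤ R →
      (∫ x in ball (0 : Esp n) r, |f x| ^ q) ≤ Z r ^ (q - p) * A := by
    intro r hr hrR
    have hZr := hZ0 r hr hrR
    have hae : ∀ᵐ x ∂(volume.restrict (ball (0 : Esp n) r)),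
        |f x| ^ q ≤ Z r ^ (q - p) * |f x| ^ p := by
      refine (haeZ r hr hrR).mono fun x hx => ?_
      rcases eq_or_lt_of_le (abs_nonneg (f x)) with h0 | h0
      · rw [← h0]
        simp [Real.zero_rpow hq.ne', Real.zero_rpow hp.ne']
      · calc |f x| ^ q = |f x| ^ (q - p) * |f x| ^ p := by
              rw [← Real.rpow_add h0]; ring_nf
          _ ≤ Z r ^ (q - p) * |f x| ^ p := by
              apply mul_le_mul_of_nonneg_right
                (Real.rpow_le_rpow (abs_nonneg _) hx (by linarith))
                (Real.rpow_nonneg (abs_nonneg _) _)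
    have hint_q : IntegrableOn (fun x => |f x| ^ q) (ball (0 : Esp n) r) volume :=
      (hint q hq).mono_set (ball_subset_ball hrR)
    have hint_p : IntegrableOn (fun x => Z r ^ (q - p) * |f x| ^ p)
        (ball (0 : Esp n) r) volume :=
      ((hint p hp).mono_set (ball_subset_ball hrR)).const_mul _
    calc (∫ x in ball (0 : Esp n) r, |f x| ^ q)
        ≤ ∫ x in ball (0 : Esp n) r, Z r ^ (q - p) * |f x| ^ p :=
          integral_mono_ae hint_q hint_p hae
      _ = Z r ^ (q - p) * ∫ x in ball (0 : Esp n) r, |f x| ^ p := integral_const_mul _ _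
      _ ≤ Z r ^ (q - p) * A := by
          apply mul_le_mul_of_nonneg_left _ (Real.rpow_nonneg hZr _)
          rw [hAdef]
          apply setIntegral_mono_set (hint p hp)
            (Eventually.of_forall fun x => Real.rpow_nonneg (abs_nonneg _) _)
            (HasSubset.Subset.eventuallyLE (ball_subset_ball hrR))
  -- radii
  set ρ : ℕ → ℝ := fun i => R - R/2 * (1/2)^i with hρdef
  clear_value ρ
  have hρ0 : ρ 0 = R/2 := by simp [hρdef]; ring
  have hhalf : ∀ i : ℕ, (0:ℝ) < (1/2:ℝ)^i := fun i => by positivity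
  have hhalf1 : ∀ i : ℕ, ((1/2:ℝ))^i ≤ 1 := fun i => pow_le_one₀ (by norm_num) (by norm_num)
  have hρpos : ∀ i, 0 < ρ i := by
    intro i
    have := hhalf1 i
    simp only [hρdef]
    nlinarith
  have hρltR : ∀ i, ρ i < R := by
    intro i
    have := hhalf i
    simp only [hρdef]
    nlinarith
  have hgap : ∀ i, ρ (i+1) - ρ i = R/4 * (1/2)^i := by
    intro i
    simp only [hρdef, pow_succ]
    ring
  -- the one-step iteration
  set c : ℕ → ℝ := fun i => γ * (R/4 * (1/2)^i) ^ (-(n:ℝ)/q) * A ^ (1/q) with hcdef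
  clear_value c
  have hc0 : ∀ i, 0 ≤ c i := by
    intro i
    have : (0:ℝ) < R/4 * (1/2)^i := by positivity
    rw [hcdef]
    exact mul_nonneg (mul_nonneg hγ.le (Real.rpow_nonneg this.le _)) (Real.rpow_nonneg hA0 _)
  have hF7 : ∀ i, Z (ρ i) ≤ c i * Z (ρ (i+1)) ^ θ := by
    intro i
    have hd : (0:ℝ) < R/4 * (1/2)^i := by positivity
    have hrpos := hρpos (i+1)
    have hrR := hρltR (i+1)
    have hgapi := hgap i
    have hρi := hρpos i
    have hσ : (R/4 * (1/2)^i) / ρ (i+1) ∈ Set.Ioo (0:ℝ) 1 :=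
      ⟨div_pos hd hrpos, (div_lt_one hrpos).2 (by linarith)⟩
    have h1 := hiter (ρ (i+1)) ⟨hrpos, hrR⟩ _ hσ
    have he1 : (1 - (R/4 * (1/2)^i) / ρ (i+1)) * ρ (i+1) = ρ i := by
      rw [sub_mul, one_mul, div_mul_cancel₀ _ hrpos.ne']
      linarith
    have he2 : (R/4 * (1/2)^i) / ρ (i+1) * ρ (i+1) = R/4 * (1/2)^i :=
      div_mul_cancel₀ _ hrpos.ne'
    rw [he1, he2] at h1
    have hZr := hZ0 (ρ (i+1)) hrpos hrR.le
    calc Z (ρ i) ≤ γ * (R/4 * (1/2)^i) ^ (-(n:ℝ)/q) *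
          (∫ x in ball (0 : Esp n) (ρ (i+1)), |f x| ^ q) ^ (1/q) := by
          rw [hZdef]; exact h1
      _ ≤ γ * (R/4 * (1/2)^i) ^ (-(n:ℝ)/q) * (Z (ρ (i+1)) ^ (q-p) * A) ^ (1/q) := by
          apply mul_le_mul_of_nonneg_left
            (Real.rpow_le_rpow (integral_nonneg fun x => Real.rpow_nonneg (abs_nonneg _) _)
              (hF6 (ρ (i+1)) hrpos hrR.le) (by positivity))
            (by positivity)
      _ = c i * Z (ρ (i+1)) ^ θ := by
          rw [Real.mul_rpow (Real.rpow_nonneg hZr _) hA0, ← Real.rpow_mul hZr]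
          rw [show (q - p) * (1/q) = θ by rw [hθdef]; field_simp]
          simp only [hcdef]
          ring
  -- iterate
  set P : ℕ → ℝ := fun k => ∏ i ∈ Finset.range k, (c i) ^ (θ^i) with hPdef
  clear_value P
  have hP0 : ∀ k, 0 ≤ P k := by
    intro k
    rw [hPdef]
    exact Finset.prod_nonneg fun i _ => Real.rpow_nonneg (hc0 i) _
  have hF8 : ∀ k, Z (R/2) ≤ P k * Z (ρ k) ^ (θ^k) := by
    intro k
    induction k with
    | zero => simp [hPdef, hρ0]
    | succ k ih =>
      have hZk1 := hZ0 (ρ (k+1)) (hρpos (k+1)) (hρltR (k+1)).le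
      have h1 : Z (ρ k) ^ (θ^k) ≤ (c k * Z (ρ (k+1)) ^ θ) ^ (θ^k) :=
        Real.rpow_le_rpow (hZ0 _ (hρpos k) (hρltR k).le) (hF7 k) (pow_nonneg hθpos.le k)
      have h2 : (c k * Z (ρ (k+1)) ^ θ) ^ (θ^k)
          = c k ^ (θ^k) * Z (ρ (k+1)) ^ (θ^(k+1)) := by
        rw [Real.mul_rpow (hc0 k) (Real.rpow_nonneg hZk1 _), ← Real.rpow_mul hZk1]
        congr 1
        rw [pow_succ]
        ring
      calc Z (R/2) ≤ P k * Z (ρ k) ^ (θ^k) := ih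
        _ ≤ P k * (c k ^ (θ^k) * Z (ρ (k+1)) ^ (θ^(k+1))) := by
            apply mul_le_mul_of_nonneg_left _ (hP0 k)
            rw [← h2]; exact h1
        _ = P (k+1) * Z (ρ (k+1)) ^ (θ^(k+1)) := by
            simp only [hPdef, Finset.prod_range_succ]
            ring
  have hZRk : ∀ k, Z (R/2) ≤ P k * M₀ ^ (θ^k) := by
    intro k
    refine (hF8 k).trans (mul_le_mul_of_nonneg_left ?_ (hP0 k))
    exact Real.rpow_le_rpow (hZ0 _ (hρpos k) (hρltR k).le)
      (hZM _ (hρpos k) (hρltR k).le) (pow_nonneg hθpos.le k)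
  -- RHS nonneg
  have hRHSfac : (0:ℝ) < p / (q - p) * 2 ^ ((n : ℝ) / p) *
      ((2 : ℝ) ^ ((n : ℝ) / p + 1) * θ * γ) ^ (q / p) * R ^ (-(n : ℝ) / p) := by
    have h1 : (0:ℝ) < p / (q-p) := div_pos hp (by linarith)
    have h2 : (0:ℝ) < (2 : ℝ) ^ ((n : ℝ) / p + 1) * θ * γ := by positivity
    positivity
  rcases eq_or_lt_of_le hA0 with hA | hA
  · -- A = 0
    have hc00 : c 0 = 0 := by
      simp only [hcdef]
      rw [← hA, Real.zero_rpow (by positivity : (1/q : ℝ) ≠ 0)]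
      ring
    have hP1 : P 1 = 0 := by
      simp only [hPdef, Finset.prod_range_one, hc00]
      simp
    have h := hZRk 1
    rw [hP1, zero_mul] at h
    refine h.trans ?_
    exact mul_nonneg hRHSfac.le (Real.rpow_nonneg hA0 _)
  · -- A > 0
    have hcpos : ∀ i, 0 < c i := by
      intro i
      rw [hcdef]
      have h1 : (0:ℝ) < R/4 * (1/2)^i := by positivity
      positivity
    set K₁ := Real.log γ + (-(n:ℝ)/q) * Real.log (R/4) + (1/q) * Real.log A with hK₁
    set K₂ := ((n:ℝ)/q) * Real.log 2 with hK₂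
    clear_value K₁ K₂
    have hlogR4 : Real.log (R/4) = Real.log R - 2*Real.log 2 := by
      rw [Real.log_div hR.ne' (by norm_num), show (4:ℝ) = 2^(2:ℕ) by norm_num, Real.log_pow]
      push_cast
      ring
    have hlogc : ∀ i : ℕ, Real.log (c i) = K₁ + i * K₂ := by
      intro i
      have hb : (0:ℝ) < R/4 * (1/2)^i := by positivity
      rw [hcdef]
      rw [Real.log_mul (ne_of_gt (by positivity)) (ne_of_gt (by positivity)),
        Real.log_mul hγ.ne' (ne_of_gt (by positivity)),
        Real.log_rpow hb, Real.log_rpow hA,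
        Real.log_mul (ne_of_gt (by positivity)) (ne_of_gt (hhalf i)),
        Real.log_pow, one_div, Real.log_inv]
      rw [hK₁, hK₂]
      ring
    have hPM : ∀ k : ℕ, P k * M₀ ^ (θ^k) =
        Real.exp ((∑ i ∈ Finset.range k, (K₁ + i * K₂) * θ^i) + Real.log M₀ * θ^k) := by
      intro k
      rw [Real.exp_add]
      congr 1
      · rw [hPdef, Real.exp_sum]
        apply Finset.prod_congr rfl
        intro i _
        rw [Real.rpow_def_of_pos (hcpos i), hlogc i]
      · rw [Real.rpow_def_of_pos hM₀pos]
    have hsum : ∀ k : ℕ, (∑ i ∈ Finset.range k, (K₁ + i * K₂) * θ^i)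
        = K₁ * (∑ i ∈ Finset.range k, θ^i) + K₂ * (∑ i ∈ Finset.range k, (i:ℝ) * θ^i) := by
      intro k
      rw [Finset.mul_sum, Finset.mul_sum, ← Finset.sum_add_distrib]
      exact Finset.sum_congr rfl fun i _ => by ring
    have hS : Tendsto (fun k => ∑ i ∈ Finset.range k, θ^i) atTop (𝓝 (1-θ)⁻¹) :=
      (hasSum_geometric_of_lt_one hθpos.le hθlt).tendsto_sum_nat
    have hT : Tendsto (fun k => ∑ i ∈ Finset.range k, (i:ℝ) * θ^i) atTop (𝓝 (θ/(1-θ)^2)) :=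
      (hasSum_coe_mul_geometric_of_norm_lt_one
        (by rwa [Real.norm_eq_abs, abs_of_pos hθpos])).tendsto_sum_nat
    have hθk : Tendsto (fun k : ℕ => θ^k) atTop (𝓝 0) :=
      tendsto_pow_atTop_nhds_zero_of_lt_one hθpos.le hθlt
    set Λ := K₁ * (1-θ)⁻¹ + K₂ * (θ/(1-θ)^2) with hΛ
    have htend : Tendsto (fun k => P k * M₀ ^ (θ^k)) atTop (𝓝 (Real.exp Λ)) := by
      have h1 : Tendsto
          (fun k => (∑ i ∈ Finset.range k, (K₁ + i*K₂) * θ^i) + Real.log M₀ * θ^k)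
          atTop (𝓝 (Λ + Real.log M₀ * 0)) := by
        apply Tendsto.add
        · exact ((hS.const_mul K₁).add (hT.const_mul K₂)).congr fun k => (hsum k).symm
        · exact hθk.const_mul _
      have h2 := (Real.continuous_exp.tendsto _).comp h1
      simp only [mul_zero, add_zero] at h2
      exact h2.congr fun k => (hPM k).symm
    have hZΛ : Z (R/2) ≤ Real.exp Λ := ge_of_tendsto' htend hZRk
    set D := γ^(q/p) * R^(-(n:ℝ)/p) * A^(1/p) * (2:ℝ)^((n:ℝ)/p + ((n:ℝ)/p)*(q/p)) with hDdef
    have hDpos : 0 < D := by rw [hDdef]; positivity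
    have hlogD : Real.log D = (q/p)*Real.log γ + (-(n:ℝ)/p)*Real.log R + (1/p)*Real.log A
        + ((n:ℝ)/p + ((n:ℝ)/p)*(q/p))*Real.log 2 := by
      rw [hDdef]
      rw [Real.log_mul (ne_of_gt (by positivity)) (ne_of_gt (by positivity)),
        Real.log_mul (ne_of_gt (by positivity)) (ne_of_gt (by positivity)),
        Real.log_mul (ne_of_gt (by positivity)) (ne_of_gt (by positivity)),
        Real.log_rpow hγ, Real.log_rpow hR, Real.log_rpow hA, Real.log_rpow two_pos]
    have hExpΛ : Real.exp Λ = D := by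
      rw [show D = Real.exp (Real.log D) from (Real.exp_log hDpos).symm]
      congr 1
      rw [hlogD, hΛ, hK₁, hK₂, hθdef, hlogR4]
      field_simp
      rw [show q - (q - p) = p by ring]
      field_simp
      ring
    have hkey := key_ineq hp hpq
    have hRHSeq : p/(q-p) * 2^((n:ℝ)/p) * ((2:ℝ)^((n:ℝ)/p+1) * θ * γ)^(q/p)
        * R^(-(n:ℝ)/p) * A^(1/p) = D * (p/(q-p) * (2*θ)^(q/p)) := by
      have e1 : ((2:ℝ)^((n:ℝ)/p+1)) ^ (q/p) = 2^(((n:ℝ)/p)*(q/p)) * 2^(q/p) := by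
        rw [← Real.rpow_mul two_pos.le, ← Real.rpow_add two_pos]
        congr 1
        ring
      have e2 : (2:ℝ)^((n:ℝ)/p + ((n:ℝ)/p)*(q/p)) = 2^((n:ℝ)/p) * 2^(((n:ℝ)/p)*(q/p)) :=
        Real.rpow_add two_pos _ _
      rw [Real.mul_rpow (mul_nonneg (Real.rpow_nonneg two_pos.le _) hθpos.le) hγ.le,
        Real.mul_rpow (Real.rpow_nonneg two_pos.le _) hθpos.le,
        e1, Real.mul_rpow two_pos.le hθpos.le, hDdef, e2]
      ring
    calc Z (R/2) ≤ Real.exp Λ := hZΛ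
      _ = D := hExpΛ
      _ ≤ D * (p/(q-p) * (2*θ)^(q/p)) :=
          le_mul_of_one_le_right hDpos.le (by rw [hθdef]; exact hkey)
      _ = _ := hRHSeq.symm
end
end

section
/- Let n ≥ 1 be an integer, R > 0, p > 0 and γ > 0, and let f : ℝⁿ → ℝ be measurable and essentially bounded on B_R. Assume that for every r ∈ (0, R) and every σ ∈ (0,1): esssup_{B_{(1−σ)r}} |f| ≤ γ (σr)^{−n/(2p)} ( ∫_{B_r} |f|^{2p} dx )^{1/(2p)}. Then esssup_{B_{R/2}} |f| ≤ 8^{n/p} γ² R^{−n/p} ( ∫_{B_R} |f|^p dx )^{1/p}. -/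
open MeasureTheory Metric Real Filter
open scoped InnerProductSpace Topology

noncomputable section

/-- **Lemma 3.2, case `q = 2p`.** If `f` is measurable and essentially bounded on `B_R` and
`esssup_{B_{(1-σ)r}} |f| ≤ γ (σr)^{-n/(2p)} (∫_{B_r} |f|^{2p})^{1/(2p)}` for all `r ∈ (0,R)`,
`σ ∈ (0,1)`, then `esssup_{B_{R/2}} |f| ≤ 8^{n/p} γ² R^{-n/p} (∫_{B_R} |f|^p)^{1/p}`. -/
theorem statement9 (n : ℕ) (hn : 1 ≤ n) (R p γ : ℝ) (hR : 0 < R) (hp : 0 < p)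
    (hγ : 0 < γ) (f : Esp n → ℝ) (hmeas : Measurable f)
    (hbdd : ∃ M : ℝ, ∀ᵐ x ∂(volume.restrict (ball (0 : Esp n) R)), |f x| ≤ M)
    (hiter : ∀ r ∈ Set.Ioo (0 : ℝ) R, ∀ σ ∈ Set.Ioo (0 : ℝ) 1,
      essSup (fun x => |f x|) (volume.restrict (ball (0 : Esp n) ((1 - σ) * r)))
        ≤ γ * (σ * r) ^ (-(n : ℝ) / (2 * p)) *
            (∫ x in ball (0 : Esp n) r, |f x| ^ (2 * p)) ^ (1 / (2 * p))) :
    essSup (fun x => |f x|) (volume.restrict (ball (0 : Esp n) (R / 2)))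
      ≤ (8 : ℝ) ^ ((n : ℝ) / p) * γ ^ 2 *
          R ^ (-(n : ℝ) / p) * (∫ x in ball (0 : Esp n) R, |f x| ^ p) ^ (1 / p) := by
  classical
  set M : ℝ → ℝ := fun ρ => essSup (fun x => |f x|) (volume.restrict (ball (0 : Esp n) ρ))
    with hM
  set I : ℝ := ∫ x in ball (0 : Esp n) R, |f x| ^ p with hI
  have hIn : 0 ≤ I := integral_nonneg fun x => Real.rpow_nonneg (abs_nonneg _) _
  obtain ⟨M0, hM0⟩ := hbdd
  set M1 : ℝ := max M0 1 with hM1def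
  have hM1one : (1:ℝ) ≤ M1 := le_max_right _ _
  have hboundR : ∀ᵐ x ∂(volume.restrict (ball (0 : Esp n) R)), |f x| ≤ M1 :=
    hM0.mono fun x h => h.trans (le_max_left _ _)
  have hbound : ∀ ρ : ℝ, ρ ≤ R →
      ∀ᵐ x ∂(volume.restrict (ball (0 : Esp n) ρ)), |f x| ≤ M1 := fun ρ hρ =>
    ae_restrict_of_ae_restrict_of_subset (ball_subset_ball hρ) hboundR
  have hne : ∀ ρ : ℝ, 0 < ρ → (ae (volume.restrict (ball (0 : Esp n) ρ))).NeBot := by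
    intro ρ hρ
    rw [ae_neBot, Ne, Measure.restrict_eq_zero]
    exact (measure_ball_pos volume 0 hρ).ne'
  have hbd : ∀ ρ : ℝ, ρ ≤ R →
      IsBoundedUnder (· ≤ ·) (ae (volume.restrict (ball (0 : Esp n) ρ)))
        (fun x => |f x|) := fun ρ hρ => ⟨M1, by simpa [Filter.eventually_map] using hbound ρ hρ⟩
  have hcb : ∀ ρ : ℝ, 0 < ρ →
      IsCoboundedUnder (· ≤ ·) (ae (volume.restrict (ball (0 : Esp n) ρ)))
        (fun x => |f x|) := by
    intro ρ hρ
    haveI := hne ρ hρ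
    exact isCoboundedUnder_le_of_le _ (x := 0) fun x => abs_nonneg _
  -- essSup is at most M1
  have hMleM1 : ∀ ρ : ℝ, 0 < ρ → ρ ≤ R → M ρ ≤ M1 := by
    intro ρ h0 hρ
    exact limsup_le_of_le (hcb ρ h0) (hbound ρ hρ)
  -- a.e. bound by essSup
  have haeM : ∀ ρ : ℝ, ρ ≤ R →
      ∀ᵐ x ∂(volume.restrict (ball (0 : Esp n) ρ)), |f x| ≤ M ρ := fun ρ hρ =>
    eventually_le_limsup (hbd ρ hρ)
  -- monotonicity
  have hMmono : ∀ ρ ρ' : ℝ, 0 < ρ → ρ ≤ ρ' → ρ' ≤ R → M ρ ≤ M ρ' := by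
    intro ρ ρ' h0 h1 h2
    exact limsup_le_of_le (hcb ρ h0)
      (ae_restrict_of_ae_restrict_of_subset (ball_subset_ball h1) (haeM ρ' h2))
  have hMnonneg : ∀ ρ : ℝ, 0 < ρ → ρ ≤ R → 0 ≤ M ρ := by
    intro ρ h0 hρ
    haveI := hne ρ h0
    exact le_limsup_of_frequently_le
      ((Eventually.of_forall fun x => abs_nonneg (f x)).frequently) (hbd ρ hρ)
  haveI hfin : IsFiniteMeasure (volume.restrict (ball (0 : Esp n) R)) :=
    ⟨by rw [Measure.restrict_apply_univ]; exact measure_ball_lt_top⟩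
  have hint : ∀ q : ℝ, 0 < q →
      IntegrableOn (fun x => |f x| ^ q) (ball (0 : Esp n) R) volume := by
    intro q hq
    refine Integrable.mono' (integrable_const (M1 ^ q)) ?_ ?_
    · exact (by fun_prop : Measurable fun x => |f x| ^ q).aestronglyMeasurable
    · refine hboundR.mono fun x hx => ?_
      rw [Real.norm_eq_abs, abs_of_nonneg (Real.rpow_nonneg (abs_nonneg _) _)]
      exact Real.rpow_le_rpow (abs_nonneg _) hx hq.le
  -- integral comparison
  have keyA : ∀ r : ℝ, 0 < r → r < R →
      (∫ x in ball (0 : Esp n) r, |f x| ^ (2 * p)) ≤ (M r) ^ p * I := by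
    intro r h0 hr
    have hsub : ball (0 : Esp n) r ⊆ ball (0 : Esp n) R := ball_subset_ball hr.le
    have h1 : (∫ x in ball (0 : Esp n) r, |f x| ^ (2 * p))
        ≤ ∫ x in ball (0 : Esp n) r, (M r) ^ p * |f x| ^ p := by
      refine integral_mono_ae ((hint (2*p) (by positivity)).mono_set hsub)
        (((hint p hp).mono_set hsub).const_mul _) ?_
      refine (haeM r hr.le).mono fun x hx => ?_
      have h2p : |f x| ^ (2 * p) = |f x| ^ p * |f x| ^ p := by
        rw [two_mul, Real.rpow_add' (abs_nonneg _) (by positivity)]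
      show |f x| ^ (2 * p) ≤ M r ^ p * |f x| ^ p
      rw [h2p]
      exact mul_le_mul_of_nonneg_right
        (Real.rpow_le_rpow (abs_nonneg _) hx hp.le)
        (Real.rpow_nonneg (abs_nonneg _) _)
    have h2 : (∫ x in ball (0 : Esp n) r, (M r) ^ p * |f x| ^ p)
        ≤ ∫ x in ball (0 : Esp n) R, (M r) ^ p * |f x| ^ p := by
      refine setIntegral_mono_set ((hint p hp).const_mul _)
        (Eventually.of_forall fun x =>
          mul_nonneg (Real.rpow_nonneg (hMnonneg r h0 hr.le) _)
            (Real.rpow_nonneg (abs_nonneg _) _))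
        (HasSubset.Subset.eventuallyLE hsub)
      -- nonneg: (M r)^p * |f x|^p ≥ 0 via rpow_nonneg of nonneg base
    have h3 : (∫ x in ball (0 : Esp n) R, (M r) ^ p * |f x| ^ p) = (M r) ^ p * I := by
      rw [hI, integral_const_mul]
    calc (∫ x in ball (0 : Esp n) r, |f x| ^ (2 * p)) ≤ _ := h1
      _ ≤ _ := h2
      _ = _ := h3
  set e : ℝ := (n : ℝ) / (2 * p) with he
  have hepos : 0 < e := by positivity
  set D : ℝ := γ * I ^ (1 / (2 * p)) with hD
  have key : ∀ r ∈ Set.Ioo (0:ℝ) R, ∀ σ ∈ Set.Ioo (0:ℝ) 1,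
      M ((1 - σ) * r) ≤ D * (σ * r) ^ (-e) * (M r) ^ ((1:ℝ)/2) := by
    intro r hr σ hσ
    have h1 := hiter r hr σ hσ
    have hMr0 : 0 ≤ M r := hMnonneg r hr.1 hr.2.le
    have h2 : (∫ x in ball (0 : Esp n) r, |f x| ^ (2 * p)) ^ (1 / (2 * p))
        ≤ ((M r) ^ p * I) ^ (1 / (2 * p)) :=
      Real.rpow_le_rpow (integral_nonneg fun x => Real.rpow_nonneg (abs_nonneg _) _)
        (keyA r hr.1 hr.2) (by positivity)
    have h3 : ((M r) ^ p) ^ (1 / (2 * p)) = (M r) ^ ((1:ℝ)/2) := by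
      rw [← Real.rpow_mul hMr0]
      congr 1
      field_simp
    have hc0 : 0 ≤ γ * (σ * r) ^ (-(n:ℝ) / (2 * p)) :=
      mul_nonneg hγ.le (Real.rpow_nonneg (mul_pos hσ.1 hr.1).le _)
    calc M ((1 - σ) * r) ≤ γ * (σ * r) ^ (-(n:ℝ) / (2 * p)) *
          (∫ x in ball (0 : Esp n) r, |f x| ^ (2 * p)) ^ (1 / (2 * p)) := h1
      _ ≤ γ * (σ * r) ^ (-(n:ℝ) / (2 * p)) * (((M r) ^ p * I) ^ (1 / (2 * p))) :=
          mul_le_mul_of_nonneg_left h2 hc0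
      _ = D * (σ * r) ^ (-e) * (M r) ^ ((1:ℝ)/2) := by
          rw [Real.mul_rpow (Real.rpow_nonneg hMr0 _) hIn, h3, hD, he, neg_div]
          ring
  -- the sequence of radii
  set rs : ℕ → ℝ := fun k => R - R * (1/2)^(k+1) with hrs
  have hrs0 : rs 0 = R / 2 := by simp [hrs]; ring
  have hpowle : ∀ k : ℕ, ((1:ℝ)/2)^(k+1) ≤ 1/2 := by
    intro k
    calc ((1:ℝ)/2)^(k+1) ≤ (1/2)^1 :=
      pow_le_pow_of_le_one (by norm_num) (by norm_num) (by omega)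
      _ = 1/2 := by norm_num
  have hrsmem : ∀ k : ℕ, rs k ∈ Set.Ioo (0:ℝ) R := by
    intro k
    have h1 : (0:ℝ) < (1/2:ℝ)^(k+1) := by positivity
    have h2 := hpowle k
    constructor
    · simp only [hrs]
      nlinarith
    · simp only [hrs]
      nlinarith
  have hrsmono : ∀ k : ℕ, rs k ≤ rs (k+1) := by
    intro k
    simp only [hrs]
    have : ((1:ℝ)/2)^(k+1+1) ≤ (1/2)^(k+1) :=
      pow_le_pow_of_le_one (by norm_num) (by norm_num) (by omega)
    nlinarith
  have hrsmono' : ∀ k : ℕ, R/2 ≤ rs k := by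
    intro k
    rw [← hrs0]
    induction k with
    | zero => exact le_refl _
    | succ m ih => exact le_trans ih (hrsmono m)
  have hstep : ∀ k : ℕ, M (rs k) ≤
      D * (R * (1/2)^(k+2)) ^ (-e) * (M (rs (k+1))) ^ ((1:ℝ)/2) := by
    intro k
    have hr' := hrsmem (k+1)
    have hr'pos : 0 < rs (k+1) := hr'.1
    set σ : ℝ := (R * (1/2)^(k+2)) / rs (k+1) with hσdef
    have hp2 : (0:ℝ) < (1/2:ℝ)^(k+2) := by positivity
    have hσpos : 0 < σ := div_pos (by positivity) hr'pos
    have hppow : ((1:ℝ)/2)^(k+2) = (1/2)^(k+1) * (1/2) := by rw [pow_succ]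
    have h4 : ((1:ℝ)/2)^(k+2) ≤ 1/4 := by
      calc ((1:ℝ)/2)^(k+2) ≤ (1/2)^2 :=
        pow_le_pow_of_le_one (by norm_num) (by norm_num) (by omega)
        _ = 1/4 := by norm_num
    have hσlt : σ < 1 := by
      rw [div_lt_one hr'pos]
      simp only [hrs]
      have hee : ((1:ℝ)/2)^(k+1+1) = (1/2)^(k+2) := by norm_num
      rw [hee]
      nlinarith
    have hσr : σ * rs (k+1) = R * (1/2)^(k+2) := by
      rw [hσdef]
      exact div_mul_cancel₀ _ hr'pos.ne'
    have hσr' : (1 - σ) * rs (k+1) = rs k := by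
      have : (1 - σ) * rs (k+1) = rs (k+1) - σ * rs (k+1) := by ring
      rw [this, hσr]
      simp only [hrs]
      rw [hppow]
      ring
    have := key (rs (k+1)) hr' σ ⟨hσpos, hσlt⟩
    rw [hσr', hσr] at this
    exact this
  show M (R/2) ≤ (8:ℝ) ^ ((n:ℝ)/p) * γ^2 * R ^ (-(n:ℝ)/p) * I ^ (1/p)
  by_cases hM2 : M (R/2) ≤ 0
  · refine hM2.trans ?_
    have h8 : (0:ℝ) ≤ (8:ℝ) ^ ((n:ℝ)/p) := Real.rpow_nonneg (by norm_num) _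
    have hRn : (0:ℝ) ≤ R ^ (-(n:ℝ)/p) := Real.rpow_nonneg hR.le _
    have hIn' : (0:ℝ) ≤ I ^ (1/p) := Real.rpow_nonneg hIn _
    positivity
  push_neg at hM2
  have hR2 : (0:ℝ) < R / 2 := by linarith
  have hMrpos : ∀ k, 0 < M (rs k) := fun k =>
    lt_of_lt_of_le hM2 (hMmono (R/2) (rs k) hR2 (hrsmono' k) (hrsmem k).2.le)
  have hIpos : 0 < I := by
    rcases hIn.lt_or_eq with h | h
    · exact h
    · exfalso
      have hD0 : D = 0 := by
        rw [hD, ← h, Real.zero_rpow (by positivity : (1:ℝ)/(2*p) ≠ 0), mul_zero]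
      have := hstep 0
      rw [hD0, zero_mul, zero_mul] at this
      exact absurd (lt_of_lt_of_le (hMrpos 0) this) (lt_irrefl 0)
  have hDpos : 0 < D := mul_pos hγ (Real.rpow_pos_of_pos hIpos _)
  set L : ℕ → ℝ := fun k => Real.log (M (rs k)) with hL
  set c : ℕ → ℝ := fun k => Real.log D - e * Real.log (R * (1/2)^(k+2)) with hc
  have hLrec : ∀ k, L k ≤ c k + (1/2) * L (k+1) := by
    intro k
    have h1 := hstep k
    have ht : (0:ℝ) < R * (1/2)^(k+2) := by positivity
    have hMk1 : 0 < M (rs (k+1)) := hMrpos (k+1)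
    have h2 : Real.log (M (rs k))
        ≤ Real.log (D * (R * (1/2)^(k+2)) ^ (-e) * (M (rs (k+1))) ^ ((1:ℝ)/2)) :=
      Real.log_le_log (hMrpos k) h1
    rw [Real.log_mul (mul_ne_zero hDpos.ne' (Real.rpow_pos_of_pos ht _).ne')
        (Real.rpow_pos_of_pos hMk1 _).ne',
      Real.log_mul hDpos.ne' (Real.rpow_pos_of_pos ht _).ne',
      Real.log_rpow ht, Real.log_rpow hMk1] at h2
    simp only [hL, hc]
    linarith
  have hLM1 : ∀ k, L k ≤ Real.log M1 := fun k =>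
    Real.log_le_log (hMrpos k) (hMleM1 (rs k) (hrsmem k).1 (hrsmem k).2.le)
  have hInd : ∀ k, L 0 ≤ (∑ j ∈ Finset.range k, (1/2:ℝ)^j * c j) + (1/2:ℝ)^k * L k := by
    intro k
    induction k with
    | zero => simp
    | succ m ih =>
      have h2 : (0:ℝ) ≤ (1/2:ℝ)^m := by positivity
      have h3 : (1/2:ℝ)^m * L m ≤ (1/2:ℝ)^m * (c m + (1/2) * L (m+1)) :=
        mul_le_mul_of_nonneg_left (hLrec m) h2
      rw [Finset.sum_range_succ, pow_succ]
      linarith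
  have hBle : ∀ k, L 0 ≤ (∑ j ∈ Finset.range k, (1/2:ℝ)^j * c j)
      + (1/2:ℝ)^k * Real.log M1 := by
    intro k
    have h2 : (1/2:ℝ)^k * L k ≤ (1/2:ℝ)^k * Real.log M1 :=
      mul_le_mul_of_nonneg_left (hLM1 k) (by positivity)
    linarith [hInd k]
  set α' : ℝ := Real.log D - e * Real.log R - 2 * e * Real.log (1/2) with hα
  set β' : ℝ := - (e * Real.log (1/2)) with hβ
  have hcg : (fun j : ℕ => α' * (1/2:ℝ)^j + β' * ((j:ℝ) * (1/2:ℝ)^j))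
      = fun j : ℕ => (1/2:ℝ)^j * c j := by
    funext j
    simp only [hα, hβ, hc]
    rw [Real.log_mul hR.ne' (by positivity), Real.log_pow]
    push_cast
    ring
  have h1s : HasSum (fun j:ℕ => ((1:ℝ)/2)^j) 2 := by
    have := hasSum_geometric_of_lt_one (by norm_num : (0:ℝ) ≤ 1/2) (by norm_num : (1:ℝ)/2 < 1)
    norm_num at this
    exact this
  have h2s : HasSum (fun j:ℕ => (j:ℝ) * (1/2:ℝ)^j) 2 := by
    have := hasSum_coe_mul_geometric_of_norm_lt_one (𝕜 := ℝ) (r := (1/2:ℝ))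
      (by rw [Real.norm_eq_abs]; rw [abs_of_nonneg]; norm_num; norm_num)
    norm_num at this
    exact this
  have hgsum : HasSum (fun j => (1/2:ℝ)^j * c j) (α' * 2 + β' * 2) := by
    have := (h1s.mul_left α').add (h2s.mul_left β')
    rwa [hcg] at this
  have htend : Tendsto (fun k => ∑ j ∈ Finset.range k, (1/2:ℝ)^j * c j)
      atTop (𝓝 (α' * 2 + β' * 2)) := hgsum.tendsto_sum_nat
  have htend2 : Tendsto (fun k : ℕ => (1/2:ℝ)^k * Real.log M1) atTop (𝓝 0) := by
    have := (tendsto_pow_atTop_nhds_zero_of_lt_one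
      (by norm_num : (0:ℝ) ≤ 1/2) (by norm_num : (1:ℝ)/2 < 1)).mul_const (Real.log M1)
    simpa using this
  have hL0 : L 0 ≤ α' * 2 + β' * 2 := by
    have h := htend.add htend2
    rw [add_zero] at h
    exact ge_of_tendsto h (Filter.Eventually.of_forall hBle)
  have hexp : (8:ℝ) ^ ((n:ℝ)/p) * γ^2 * R ^ (-(n:ℝ)/p) * I ^ (1/p)
      = Real.exp (α' * 2 + β' * 2) := by
    rw [Real.rpow_def_of_pos (by norm_num : (0:ℝ) < 8),
      Real.rpow_def_of_pos hR, Real.rpow_def_of_pos hIpos]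
    have hγ2 : γ^2 = Real.exp (2 * Real.log γ) := by
      rw [show (2:ℝ) * Real.log γ = Real.log (γ^2) by
          rw [Real.log_pow]; push_cast; ring,
        Real.exp_log (by positivity)]
    rw [hγ2, ← Real.exp_add, ← Real.exp_add, ← Real.exp_add]
    congr 1
    simp only [hα, hβ, hD, he]
    rw [Real.log_mul hγ.ne' (Real.rpow_pos_of_pos hIpos _).ne', Real.log_rpow hIpos]
    have h8 : Real.log 8 = 3 * Real.log 2 := by
      rw [show (8:ℝ) = 2^3 by norm_num, Real.log_pow]
      push_cast; ring
    have hhalf : Real.log (1/2 : ℝ) = - Real.log 2 := by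
      rw [one_div, Real.log_inv]
    rw [h8, hhalf]
    field_simp
    ring
  have hL00 : Real.log (M (R/2)) ≤ α' * 2 + β' * 2 := by
    have : L 0 = Real.log (M (R/2)) := by rw [hL]; simp only []; rw [hrs0]
    rw [← this]
    exact hL0
  calc M (R/2) = Real.exp (Real.log (M (R/2))) := (Real.exp_log hM2).symm
    _ ≤ Real.exp (α' * 2 + β' * 2) := Real.exp_le_exp.2 hL00
    _ = _ := hexp.symm

end
end
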